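/- arXiv:2512.22458 — 2 statements merged into one kernel-verified Lean document; each statement's English description precedes it below -/
import Mathlib

section
/- Let n ≥ 1, ν > 0, and let f : ℍⁿ → ℝ be continuous, positive, attaining its maximum at the origin, with α := lim_{|ζ|_H→∞} |ζ|_H^ν f(ζ) existing and positive, β := α^{2/ν} f(0)^{−2/ν}, and such that for every ξ ∈ ℍⁿ there exists λ(ξ) > 0 with (λ(ξ)/d_H(ξ,ζ))^ν · f(Φ_{ξ,λ(ξ)}^β(ζ)) = f(ζ) for all ζ ≠ ξ. Then for every (z',t') ∈ ℍⁿ the partial derivative of f in t exists at (z',t') and satisfies ∂f/∂t (z',t') = −(ν/2) · α^{−4/ν} · t' · f(z',t')^{1+4/ν}; consequently there exists a function F : ℂⁿ → ℝ such that f(z,t) = (F(z)² + α^{−4/ν} t²)^{−ν/4} for all (z,t) ∈ ℍⁿ. -/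
open Complex Filter Topology MeasureTheory

noncomputable section

/-- The Heisenberg group ℍⁿ as ℂⁿ × ℝ. -/
abbrev Heis (n : ℕ) := (Fin n → ℂ) × ℝ

namespace Heis

variable {n : ℕ}

/-- Hermitian inner product ⟨z,z'⟩ = Σ_j z_j conj(z'_j). -/
def hermInner (z w : Fin n → ℂ) : ℂ := ∑ j, z j * (starRingEnd ℂ) (w j)

/-- Squared Euclidean norm |z|² = Σ_j |z_j|². -/
def nsq (z : Fin n → ℂ) : ℝ := ∑ j, Complex.normSq (z j)

/-- Group law (z,t)·(z',t') = (z+z', t+t'+2 Im⟨z,z'⟩). -/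
def hmul (a b : Heis n) : Heis n :=
  (a.1 + b.1, a.2 + b.2 + 2 * (hermInner a.1 b.1).im)

/-- Group inverse: ζ⁻¹ = −ζ. -/
def hinv (a : Heis n) : Heis n := (-a.1, -a.2)

/-- Korányi norm |(z,t)|_H = (|z|⁴ + t²)^{1/4}. -/
def korNorm (a : Heis n) : ℝ := ((nsq a.1) ^ 2 + a.2 ^ 2) ^ ((1 : ℝ)/4)

/-- Korányi distance d_H(ξ,ζ) = |ζ⁻¹·ξ|_H. -/
def dH (a b : Heis n) : ℝ := korNorm (hmul (hinv b) a)

/-- Open Korányi ball B_λ(ξ). -/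
def ball (ξ : Heis n) (lam : ℝ) : Set (Heis n) := {ζ | dH ξ ζ < lam}

/-- Left translation τ_ξ. -/
def tau (ξ ζ : Heis n) : Heis n := hmul ξ ζ

/-- Dilation δ_λ(z,t) = (λz, λ²t). -/
def dil (lam : ℝ) (a : Heis n) : Heis n := (fun j => (lam : ℂ) * a.1 j, lam ^ 2 * a.2)

/-- Rotation ρ_M(z,t) = (Mz,t). -/
def rot (M : Matrix (Fin n) (Fin n) ℂ) (a : Heis n) : Heis n := (M.mulVec a.1, a.2)

/-- Inversion ι(z,t) = (conj z, −t). -/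
def iota (a : Heis n) : Heis n := (fun j => (starRingEnd ℂ) (a.1 j), -a.2)

/-- w = t + i|z|². -/
def wC (a : Heis n) : ℂ := (a.2 : ℂ) + Complex.I * ((nsq a.1 : ℝ) : ℂ)

/-- CR inversion 𝒥(z,t) = (z/w, −t/|w|²). -/
def crInv (a : Heis n) : Heis n :=
  (fun j => a.1 j / wC a, -a.2 / Complex.normSq (wC a))

/-- Angles θ_k for the rotation matrix M_{ξ,β}. -/
def theta (ξ : Heis n) (β : ℝ) (k : Fin n) : ℝ :=
  if ξ.1 k ≠ 0 then 2 * (ξ.1 k).arg + (wC ξ + Complex.I * (β : ℂ)).arg else 0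

/-- The unitary diagonal matrix M_{ξ,β} = diag(e^{iθ₁},…,e^{iθₙ}). -/
def Mmat (ξ : Heis n) (β : ℝ) : Matrix (Fin n) (Fin n) ℂ :=
  Matrix.diagonal fun k => Complex.exp (Complex.I * ((theta ξ β k : ℝ) : ℂ))

/-- Generalized CR inversion Φ_{ξ,λ}^β = τ_ξ ∘ ρ_{M_{ξ,β}} ∘ δ_{λ²} ∘ 𝒥 ∘ ι ∘ τ_ξ⁻¹. -/
def Phi (ξ : Heis n) (lam β : ℝ) (ζ : Heis n) : Heis n :=
  tau ξ (rot (Mmat ξ β) (dil (lam ^ 2) (crInv (iota (hmul (hinv ξ) ζ)))))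

/-- Direction of the vector field X_j at p. -/
def XVec (j : Fin n) (p : Heis n) : Heis n := (Pi.single j (1 : ℂ), 2 * (p.1 j).im)

/-- Direction of the vector field Y_j at p. -/
def YVec (j : Fin n) (p : Heis n) : Heis n := (Pi.single j Complex.I, -2 * (p.1 j).re)

/-- The vector field X_j acting on functions. -/
def Xop (j : Fin n) (u : Heis n → ℝ) (p : Heis n) : ℝ := fderiv ℝ u p (XVec j p)

/-- The vector field Y_j acting on functions. -/
def Yop (j : Fin n) (u : Heis n → ℝ) (p : Heis n) : ℝ := fderiv ℝ u p (YVec j p)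

/-- Sub-Laplacian Δ_H = Σ_j (X_j² + Y_j²). -/
def subLap (u : Heis n → ℝ) (p : Heis n) : ℝ :=
  ∑ j, (Xop j (Xop j u) p + Yop j (Yop j u) p)

/-- Squared length of the horizontal gradient |∇_H u|² = Σ_j ((X_j u)² + (Y_j u)²). -/
def gradHSq (u : Heis n → ℝ) (p : Heis n) : ℝ :=
  ∑ j, ((Xop j u p) ^ 2 + (Yop j u p) ^ 2)

/-- Generalized Kelvin transform u_{ξ,λ}^β(η) = (λ/d_H(η,ξ))^{Q−2} u(Φ_{ξ,λ}^β(η)), Q−2 = 2n. -/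
def kelvin (u : Heis n → ℝ) (ξ : Heis n) (lam β : ℝ) (η : Heis n) : ℝ :=
  (lam / dH η ξ) ^ (2 * n) * u (Phi ξ lam β η)

/-- The filter |ζ|_H → ∞ on ℍⁿ. -/
def atInftyH (n : ℕ) : Filter (Heis n) := Filter.comap korNorm Filter.atTop

end Heis

open Heis

lemma aux_hermInner_zero_right {n : ℕ} (z : Fin n → ℂ) : hermInner z 0 = 0 := by
  simp [hermInner]

lemma aux_hermInner_zero_left {n : ℕ} (z : Fin n → ℂ) : hermInner 0 z = 0 := by
  simp [hermInner]

lemma aux_hermInner_self {n : ℕ} (z : Fin n → ℂ) : hermInner z z = ((nsq z : ℝ) : ℂ) := by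
  simp [hermInner, Complex.mul_conj, nsq]

lemma aux_nsq_nonneg {n : ℕ} (z : Fin n → ℂ) : 0 ≤ nsq z :=
  Finset.sum_nonneg fun _ _ => Complex.normSq_nonneg _

lemma aux_nsq_zero {n : ℕ} : nsq (0 : Fin n → ℂ) = 0 := by simp [nsq]

lemma aux_hmul_vert {n : ℕ} (ξ : Heis n) (x : ℝ) :
    hmul ξ ((0 : Fin n → ℂ), x) = (ξ.1, ξ.2 + x) := by
  simp [hmul, aux_hermInner_zero_right]

lemma aux_korNorm_vert {n : ℕ} (x : ℝ) :
    korNorm (((0 : Fin n → ℂ), x) : Heis n) = (x ^ 2) ^ ((1:ℝ)/4) := by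
  simp [korNorm, aux_nsq_zero]

lemma aux_dH_vert {n : ℕ} (ξ : Heis n) (x : ℝ) :
    dH ξ (hmul ξ ((0 : Fin n → ℂ), x)) = (x ^ 2) ^ ((1:ℝ)/4) := by
  rw [aux_hmul_vert]
  show korNorm (hmul (hinv (ξ.1, ξ.2 + x)) ξ) = _
  have h1 : hmul (hinv (ξ.1, ξ.2 + x)) ξ = ((0 : Fin n → ℂ), -x) := by
    have him : (hermInner (-ξ.1) ξ.1).im = 0 := by
      have heq : hermInner (-ξ.1) ξ.1 = -hermInner ξ.1 ξ.1 := by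
        unfold hermInner
        simp only [Pi.neg_apply, neg_mul, Finset.sum_neg_distrib]
      rw [heq, aux_hermInner_self]
      simp
    refine Prod.ext ?_ ?_
    · show -ξ.1 + ξ.1 = 0
      simp
    · show -(ξ.2 + x) + ξ.2 + 2 * (hermInner (-ξ.1) ξ.1).im = -x
      rw [him]; ring
  rw [h1, aux_korNorm_vert, neg_sq]

lemma aux_PhiVert {n : ℕ} (ξ : Heis n) (lam β s : ℝ) (hs : s ≠ 0) :
    Phi ξ lam β (hmul ξ ((0 : Fin n → ℂ), s)) = hmul ξ ((0 : Fin n → ℂ), lam ^ 4 / s) := by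
  have h1 : hmul (hinv ξ) (hmul ξ ((0 : Fin n → ℂ), s)) = ((0 : Fin n → ℂ), s) := by
    rw [aux_hmul_vert]
    have him : (hermInner (-ξ.1) ξ.1).im = 0 := by
      have heq : hermInner (-ξ.1) ξ.1 = -hermInner ξ.1 ξ.1 := by
        unfold hermInner
        simp only [Pi.neg_apply, neg_mul, Finset.sum_neg_distrib]
      rw [heq, aux_hermInner_self]
      simp
    refine Prod.ext ?_ ?_
    · show -ξ.1 + ξ.1 = 0
      simp
    · show -ξ.2 + (ξ.2 + s) + 2 * (hermInner (-ξ.1) ξ.1).im = s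
      rw [him]; ring
  unfold Phi
  rw [h1]
  have h2 : iota ((0 : Fin n → ℂ), s) = ((0 : Fin n → ℂ), -s) := by
    simp only [iota]
    refine Prod.ext ?_ rfl
    funext j
    simp
  rw [h2]
  have h3 : crInv ((0 : Fin n → ℂ), -s) = ((0 : Fin n → ℂ), 1 / s) := by
    have hw : wC (((0 : Fin n → ℂ), -s) : Heis n) = ((-s : ℝ) : ℂ) := by
      simp [wC, aux_nsq_zero]
    refine Prod.ext ?_ ?_
    · funext j
      show (0 : Fin n → ℂ) j / wC _ = 0
      simp
    · show -(-s) / Complex.normSq (wC (((0 : Fin n → ℂ), -s) : Heis n)) = 1 / s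
      rw [hw]
      rw [Complex.normSq_ofReal]
      field_simp
  rw [h3]
  have h4 : dil (lam ^ 2) ((0 : Fin n → ℂ), 1 / s) = ((0 : Fin n → ℂ), lam ^ 4 / s) := by
    refine Prod.ext ?_ ?_
    · funext j
      simp [dil]
    · show (lam ^ 2) ^ 2 * (1 / s) = lam ^ 4 / s
      ring
  rw [h4]
  have h5 : rot (Mmat ξ β) ((0 : Fin n → ℂ), lam ^ 4 / s) = ((0 : Fin n → ℂ), lam ^ 4 / s) := by
    refine Prod.ext ?_ ?_
    · show (Mmat ξ β).mulVec 0 = 0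
      simp [Matrix.mulVec_zero]
    · rfl
  rw [h5]
  rfl

lemma aux_exp_two_arg (c : ℂ) :
    Complex.exp (Complex.I * (2 * (c.arg : ℂ))) * (starRingEnd ℂ) c = c := by
  rcases eq_or_ne c 0 with rfl | hc
  · simp
  · have habs : (‖c‖ : ℂ) * Complex.exp (c.arg * Complex.I) = c :=
      Complex.norm_mul_exp_arg_mul_I c
    have hconj : (starRingEnd ℂ) c = (‖c‖ : ℂ) * Complex.exp (-(c.arg * Complex.I)) := by
      conv_lhs => rw [← habs]
      rw [map_mul, Complex.conj_ofReal, ← Complex.exp_conj]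
      congr 1
      simp [Complex.conj_ofReal]
    rw [hconj, ← mul_assoc, mul_comm (Complex.exp _) _, mul_assoc, ← Complex.exp_add]
    conv_rhs => rw [← habs]
    congr 1
    ring

/-- u-quantity appearing in the closed form of Φ on the central axis. -/
def auxU (n : ℕ) (z₀ : Fin n → ℂ) (t₀ t lam β : ℝ) : ℂ :=
  ((lam ^ 2 : ℝ) : ℂ) *
      Complex.exp (Complex.I * (((wC ((z₀, t₀) : Heis n) + Complex.I * (β : ℂ)).arg : ℝ) : ℂ)) /
    (((t₀ - t : ℝ) : ℂ) + Complex.I * ((nsq z₀ : ℝ) : ℂ))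

lemma aux_PhiAxis {n : ℕ} (z₀ : Fin n → ℂ) (t₀ t lam β : ℝ) (h : t₀ - t ≠ 0) :
    Phi (z₀, t₀) lam β ((0 : Fin n → ℂ), t) =
      (fun j => (1 - auxU n z₀ t₀ t lam β) * z₀ j,
        t₀ - lam ^ 4 * (t₀ - t) / ((t₀ - t) ^ 2 + (nsq z₀) ^ 2)
          + 2 * nsq z₀ * (auxU n z₀ t₀ t lam β).im) := by
  have hy0 : (0:ℝ) ≤ nsq z₀ := aux_nsq_nonneg z₀
  have hw0 : (((t₀ - t : ℝ) : ℂ) + Complex.I * ((nsq z₀ : ℝ) : ℂ)) ≠ 0 := by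
    intro hcon
    have hre := congrArg Complex.re hcon
    simp at hre
    exact h hre
  have h1 : hmul (hinv ((z₀, t₀) : Heis n)) ((0 : Fin n → ℂ), t) = (-z₀, t - t₀) := by
    refine Prod.ext ?_ ?_
    · show -z₀ + 0 = -z₀
      simp
    · show -t₀ + t + 2 * (hermInner (-z₀) 0).im = t - t₀
      rw [aux_hermInner_zero_right]
      simp
      ring
  have h2 : iota ((-z₀, t - t₀) : Heis n) =
      ((fun j => (starRingEnd ℂ) (-z₀ j)) , (t₀ - t : ℝ)) := by
    refine Prod.ext rfl ?_
    show -(t - t₀) = t₀ - t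
    ring
  have h3 : nsq (fun j => (starRingEnd ℂ) (-z₀ j)) = nsq z₀ := by
    simp [nsq]
  have h4 : wC (((fun j => (starRingEnd ℂ) (-z₀ j)), (t₀ - t : ℝ)) : Heis n)
      = ((t₀ - t : ℝ) : ℂ) + Complex.I * ((nsq z₀ : ℝ) : ℂ) := by
    simp only [wC, h3]
  have h5 : Complex.normSq (((t₀ - t : ℝ) : ℂ) + Complex.I * ((nsq z₀ : ℝ) : ℂ))
      = (t₀ - t) ^ 2 + (nsq z₀) ^ 2 := by
    rw [mul_comm, Complex.normSq_add_mul_I]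
  have h6 : crInv (((fun j => (starRingEnd ℂ) (-z₀ j)), (t₀ - t : ℝ)) : Heis n)
      = ((fun j => (starRingEnd ℂ) (-z₀ j) / (((t₀ - t : ℝ) : ℂ) + Complex.I * ((nsq z₀ : ℝ) : ℂ))),
         (-(t₀ - t) / ((t₀ - t) ^ 2 + (nsq z₀) ^ 2) : ℝ)) := by
    refine Prod.ext ?_ ?_
    · funext j
      show (starRingEnd ℂ) (-z₀ j) / wC _ = _
      rw [h4]
    · show -(t₀ - t) / Complex.normSq (wC _) = _
      rw [h4, h5]
  have h7 : dil (lam ^ 2)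
      ((fun j => (starRingEnd ℂ) (-z₀ j) / (((t₀ - t : ℝ) : ℂ) + Complex.I * ((nsq z₀ : ℝ) : ℂ))),
        (-(t₀ - t) / ((t₀ - t) ^ 2 + (nsq z₀) ^ 2) : ℝ))
      = ((fun j => ((lam ^ 2 : ℝ) : ℂ) * ((starRingEnd ℂ) (-z₀ j) / (((t₀ - t : ℝ) : ℂ) + Complex.I * ((nsq z₀ : ℝ) : ℂ)))),
         ((lam ^ 2) ^ 2 * (-(t₀ - t) / ((t₀ - t) ^ 2 + (nsq z₀) ^ 2)) : ℝ)) := rfl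
  have h8 : (Mmat ((z₀, t₀) : Heis n) β).mulVec
      (fun j => ((lam ^ 2 : ℝ) : ℂ) * ((starRingEnd ℂ) (-z₀ j) / (((t₀ - t : ℝ) : ℂ) + Complex.I * ((nsq z₀ : ℝ) : ℂ))))
      = fun k => -(auxU n z₀ t₀ t lam β * z₀ k) := by
    funext k
    rw [Mmat, Matrix.mulVec_diagonal]
    rcases eq_or_ne (z₀ k) 0 with hk | hk
    · have hth : theta ((z₀, t₀) : Heis n) β k = 0 := by
        simp [theta, hk]
      rw [hth, hk]
      simp
    · have hth : theta ((z₀, t₀) : Heis n) β k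
          = 2 * (z₀ k).arg + (wC ((z₀, t₀) : Heis n) + Complex.I * (β : ℂ)).arg := by
        simp [theta, hk]
      rw [hth]
      rw [auxU]
      push_cast
      rw [mul_add, Complex.exp_add]
      have hconj : (starRingEnd ℂ) (-z₀ k) = -((starRingEnd ℂ) (z₀ k)) := by
        simp
      rw [hconj]
      have hkey := aux_exp_two_arg (z₀ k)
      linear_combination (-(lam:ℂ) ^ 2
        * Complex.exp (Complex.I * (((wC ((z₀, t₀) : Heis n) + Complex.I * (β : ℂ)).arg : ℝ) : ℂ))
        / ((t₀ : ℂ) - (t : ℂ) + Complex.I * ((nsq z₀ : ℝ) : ℂ))) * hkey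
  have h8' : rot (Mmat ((z₀, t₀) : Heis n) β)
      ((fun j => ((lam ^ 2 : ℝ) : ℂ) * ((starRingEnd ℂ) (-z₀ j) / (((t₀ - t : ℝ) : ℂ) + Complex.I * ((nsq z₀ : ℝ) : ℂ)))),
        ((lam ^ 2) ^ 2 * (-(t₀ - t) / ((t₀ - t) ^ 2 + (nsq z₀) ^ 2)) : ℝ))
      = ((fun k => -(auxU n z₀ t₀ t lam β * z₀ k)),
          ((lam ^ 2) ^ 2 * (-(t₀ - t) / ((t₀ - t) ^ 2 + (nsq z₀) ^ 2)) : ℝ)) := by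
    unfold rot
    exact Prod.ext h8 rfl
  have h9 : hermInner z₀ (fun k => -(auxU n z₀ t₀ t lam β * z₀ k))
      = -((starRingEnd ℂ) (auxU n z₀ t₀ t lam β)) * ((nsq z₀ : ℝ) : ℂ) := by
    unfold hermInner
    have : ∀ k, z₀ k * (starRingEnd ℂ) (-(auxU n z₀ t₀ t lam β * z₀ k))
        = -((starRingEnd ℂ) (auxU n z₀ t₀ t lam β)) * (z₀ k * (starRingEnd ℂ) (z₀ k)) := by
      intro k
      simp only [map_neg, map_mul]
      ring
    rw [Finset.sum_congr rfl (fun k _ => this k), ← Finset.mul_sum]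
    congr 1
    have := aux_hermInner_self z₀
    unfold hermInner at this
    exact this
  unfold Phi
  rw [h1, h2, h6, h7, h8']
  unfold tau hmul
  refine Prod.ext ?_ ?_
  · funext k
    show z₀ k + -(auxU n z₀ t₀ t lam β * z₀ k) = (1 - auxU n z₀ t₀ t lam β) * z₀ k
    ring
  · show t₀ + (lam ^ 2) ^ 2 * (-(t₀ - t) / ((t₀ - t) ^ 2 + (nsq z₀) ^ 2))
        + 2 * (hermInner z₀ (fun k => -(auxU n z₀ t₀ t lam β * z₀ k))).im = _
    rw [h9]
    have him : (-((starRingEnd ℂ) (auxU n z₀ t₀ t lam β)) * ((nsq z₀ : ℝ) : ℂ)).im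
        = (auxU n z₀ t₀ t lam β).im * nsq z₀ := by
      simp [Complex.mul_im]
    rw [him]
    ring

lemma aux_dH_axis {n : ℕ} (z₀ : Fin n → ℂ) (t₀ t : ℝ) :
    dH ((z₀, t₀) : Heis n) ((0 : Fin n → ℂ), t) = ((nsq z₀) ^ 2 + (t₀ - t) ^ 2) ^ ((1:ℝ)/4) := by
  show korNorm (hmul (hinv ((0 : Fin n → ℂ), t)) (z₀, t₀)) = _
  have h1 : hmul (hinv (((0 : Fin n → ℂ), t) : Heis n)) ((z₀, t₀) : Heis n) = (z₀, t₀ - t) := by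
    refine Prod.ext ?_ ?_
    · show -(0 : Fin n → ℂ) + z₀ = z₀
      simp
    · show -t + t₀ + 2 * (hermInner (-(0 : Fin n → ℂ)) z₀).im = t₀ - t
      have : (-(0 : Fin n → ℂ)) = 0 := by simp
      rw [this, aux_hermInner_zero_left]
      simp
      ring
  rw [h1]
  rfl

lemma aux_rpow_quarter (lam : ℝ) (hlam : 0 < lam) : (lam ^ 4) ^ ((1:ℝ)/4) = lam := by
  rw [← Real.rpow_natCast lam 4, ← Real.rpow_mul hlam.le]
  norm_num
lemma aux_dini (φ : ℝ → ℝ) (hφ : Continuous φ) (c : ℝ)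
    (H : ∀ t δ : ℝ, 0 < δ → ∃ s, 0 < s ∧ s < δ ∧ c * s ≤ φ (t + s) - φ t) :
    ∀ a b : ℝ, a ≤ b → c * (b - a) ≤ φ b - φ a := by
  intro a b hab
  set S : Set ℝ := {x | x ∈ Set.Icc a b ∧ c * (x - a) ≤ φ x - φ a} with hS
  have hne : S.Nonempty := ⟨a, ⟨le_refl a, hab⟩, by simp⟩
  have hbdd : BddAbove S := ⟨b, fun x hx => hx.1.2⟩
  have hclosed : IsClosed S := by
    have : S = Set.Icc a b ∩ {x | c * (x - a) ≤ φ x - φ a} := rfl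
    rw [this]
    exact isClosed_Icc.inter (isClosed_le (by continuity) (by continuity))
  have hmem : sSup S ∈ S := hclosed.csSup_mem hne hbdd
  have hsb : sSup S = b := by
    by_contra hne'
    have hmb : sSup S < b := lt_of_le_of_ne hmem.1.2 hne'
    obtain ⟨s, hs0, hsδ, hss⟩ := H (sSup S) (b - sSup S) (by linarith)
    have hmemS : sSup S + s ∈ S := by
      refine ⟨⟨by linarith [hmem.1.1], by linarith⟩, ?_⟩
      have := hmem.2
      linarith
    have := le_csSup hbdd hmemS
    linarith
  have := hmem.2
  rw [hsb] at this
  exact this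
lemma aux_linear (A : ℝ) (hA : 0 < A) (N : ℝ) (hN : 0 ≤ N) (G : ℝ → ℝ)
    (hGc : Continuous G) (hGpos : ∀ t, 0 < G t)
    (growth : Tendsto (fun T => G T / (N + T ^ 2)) atTop (nhds A))
    (leq : ∀ t₀ s : ℝ, s ≠ 0 → G (t₀ + s) = s ^ 2 / (G t₀ / A) * G (t₀ + G t₀ / A / s)) :
    ∃ p : ℝ, ∀ t, G t = A * t ^ 2 + p * t + G 0 := by
  set φ : ℝ → ℝ := fun t => G t - A * t ^ 2 with hφdef
  have hφc : Continuous φ := hGc.sub (continuous_const.mul (continuous_pow 2))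
  -- L1 : key slope identity
  have L1 : ∀ t s : ℝ, s ≠ 0 →
      φ (t + s) - φ t = (A * s ^ 2 / G t) * (φ (t + G t / A / s) - φ t) := by
    intro t s hs
    have h := leq t s hs
    have hGt : G t ≠ 0 := (hGpos t).ne'
    simp only [hφdef]
    rw [h]
    field_simp
    ring
  -- L2 : φ T / T² → 0
  have hT2 : Tendsto (fun T : ℝ => T ^ 2) atTop atTop := tendsto_pow_atTop (two_ne_zero)
  have L2 : Tendsto (fun T => φ T / T ^ 2) atTop (nhds 0) := by
    have h1 : Tendsto (fun T : ℝ => (N + T ^ 2) / T ^ 2) atTop (nhds 1) := by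
      have h0 : Tendsto (fun T : ℝ => N / T ^ 2 + 1) atTop (nhds 1) := by
        have := (tendsto_const_nhds (x := N) (f := atTop (α := ℝ))).div_atTop hT2
        simpa using this.add_const 1
      apply h0.congr'
      filter_upwards [eventually_gt_atTop (0:ℝ)] with T hT
      field_simp
    have h2 := growth.mul h1
    have h3 : Tendsto (fun T => G T / T ^ 2 - A) atTop (nhds 0) := by
      have h4 : Tendsto (fun T => G T / (N + T ^ 2) * ((N + T ^ 2) / T ^ 2) - A) atTop (nhds (A * 1 - A)) :=
        h2.sub_const A
      simp only [mul_one, sub_self] at h4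
      apply h4.congr'
      filter_upwards [eventually_gt_atTop (0:ℝ)] with T hT
      have hT2' : (T:ℝ) ^ 2 ≠ 0 := by positivity
      have hNT : N + T ^ 2 ≠ 0 := by positivity
      field_simp
    apply h3.congr'
    filter_upwards [eventually_gt_atTop (0:ℝ)] with T hT
    have hT2' : (T:ℝ) ^ 2 ≠ 0 := by positivity
    simp only [hφdef]
    field_simp
  -- far-field slope comparison
  have far : ∀ t ε : ℝ, 0 < ε → ∀ᶠ T in atTop, |(φ T - φ t) / (T - t) - φ T / T| ≤ ε := by
    intro t ε hε
    have key : Tendsto (fun T => (φ T - φ t) / (T - t) - φ T / T) atTop (nhds 0) := by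
      have e2 : Tendsto (fun T : ℝ => φ t / (T - t)) atTop (nhds 0) :=
        tendsto_const_nhds.div_atTop (tendsto_atTop_add_const_right _ (-t) tendsto_id)
      have e3 : Tendsto (fun T : ℝ => t * T / (T - t)) atTop (nhds t) := by
        have h5 : Tendsto (fun T : ℝ => t / (1 - t / T)) atTop (nhds t) := by
          have h6 : Tendsto (fun T : ℝ => 1 - t / T) atTop (nhds 1) := by
            have := (tendsto_const_nhds (x := t) (f := atTop (α := ℝ))).div_atTop tendsto_id
            simpa using ((tendsto_const_nhds (x := (1:ℝ))).sub this)
          simpa [Pi.div_def] using (tendsto_const_nhds (x := t)).div h6 one_ne_zero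
        apply h5.congr'
        filter_upwards [eventually_gt_atTop (max 0 (2*|t|+1))] with T hT
        have hT0 : T ≠ 0 := by
          have := lt_of_le_of_lt (le_max_left 0 (2*|t|+1)) hT; linarith
        have hTt : T - t ≠ 0 := by
          have h7 := lt_of_le_of_lt (le_max_right 0 (2*|t|+1)) hT
          have := abs_lt.mp (lt_of_le_of_lt (le_of_eq rfl) (lt_of_le_of_lt (by linarith [abs_nonneg t] : |t| ≤ 2*|t|+1) h7) : |t| < T)
          linarith [this.1, this.2]
        field_simp
      have e1 : Tendsto (fun T => φ T / T ^ 2 * (t * T / (T - t))) atTop (nhds 0) := by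
        simpa using L2.mul e3
      have := e1.sub e2
      rw [sub_zero] at this
      apply this.congr'
      filter_upwards [eventually_gt_atTop (max 0 (2*|t|+1))] with T hT
      have hT0 : T ≠ 0 := by
        have := lt_of_le_of_lt (le_max_left 0 (2*|t|+1)) hT; linarith
      have hTt : T - t ≠ 0 := by
        have h7 := lt_of_le_of_lt (le_max_right 0 (2*|t|+1)) hT
        have : |t| < T := by
          have := abs_nonneg t; linarith
        have := abs_lt.mp this
        linarith [this.1, this.2]
      field_simp
      ring
    have := NormedAddCommGroup.tendsto_nhds_zero.mp key ε hε
    filter_upwards [this] with T hT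
    exact le_of_lt (by simpa [Real.norm_eq_abs] using hT)
  -- construction of small increments from far-field slopes
  have build : ∀ c ε : ℝ, 0 < ε → (∃ᶠ T in atTop, c < φ T / T) →
      ∀ t δ : ℝ, 0 < δ → ∃ s, 0 < s ∧ s < δ ∧ (c - ε) * s ≤ φ (t + s) - φ t := by
    intro c ε hε hfreq t δ hδ
    have hk : 0 < G t / A := div_pos (hGpos t) hA
    have hev := (far t ε hε).and ((eventually_gt_atTop (t + G t / A / δ)).and (eventually_gt_atTop t))
    obtain ⟨T, hρT, hfar, hT1, hT2'⟩ := (hfreq.and_eventually hev).exists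
    have hTt : (0:ℝ) < T - t := by linarith
    refine ⟨G t / A / (T - t), div_pos hk hTt, ?_, ?_⟩
    · rw [div_lt_iff₀ hTt]
      have h8 : G t / A / δ < T - t := by linarith
      rw [div_lt_iff₀ hδ] at h8
      linarith [h8]
    · set s := G t / A / (T - t) with hsdef
      have hs0 : s ≠ 0 := (div_pos hk hTt).ne'
      have hTeq : t + G t / A / s = T := by
        have hA' : A ≠ 0 := hA.ne'
        have hG' : G t ≠ 0 := (hGpos t).ne'
        rw [hsdef]
        field_simp
        ring
      have hL := L1 t s hs0
      rw [hTeq] at hL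
      have hcoef : A * s ^ 2 / G t = s / (T - t) := by
        rw [hsdef]
        have : G t ≠ 0 := (hGpos t).ne'
        field_simp
      rw [hcoef] at hL
      have hslope : c - ε ≤ (φ T - φ t) / (T - t) := by
        have h9 := abs_le.mp hfar
        have := h9.1
        linarith
      have hspos : 0 < s := div_pos hk hTt
      calc (c - ε) * s ≤ ((φ T - φ t) / (T - t)) * s := by
            apply mul_le_mul_of_nonneg_right hslope hspos.le
        _ = s / (T - t) * (φ T - φ t) := by ring
        _ = φ (t + s) - φ t := hL.symm
  have buildLo : ∀ c ε : ℝ, 0 < ε → (∃ᶠ T in atTop, φ T / T < c) →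
      ∀ t δ : ℝ, 0 < δ → ∃ s, 0 < s ∧ s < δ ∧ φ (t + s) - φ t ≤ (c + ε) * s := by
    intro c ε hε hfreq t δ hδ
    have hk : 0 < G t / A := div_pos (hGpos t) hA
    have hev := (far t ε hε).and ((eventually_gt_atTop (t + G t / A / δ)).and (eventually_gt_atTop t))
    obtain ⟨T, hρT, hfar, hT1, hT2'⟩ := (hfreq.and_eventually hev).exists
    have hTt : (0:ℝ) < T - t := by linarith
    refine ⟨G t / A / (T - t), div_pos hk hTt, ?_, ?_⟩
    · rw [div_lt_iff₀ hTt]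
      have h8 : G t / A / δ < T - t := by linarith
      rw [div_lt_iff₀ hδ] at h8
      linarith [h8]
    · set s := G t / A / (T - t) with hsdef
      have hs0 : s ≠ 0 := (div_pos hk hTt).ne'
      have hTeq : t + G t / A / s = T := by
        have hA' : A ≠ 0 := hA.ne'
        have hG' : G t ≠ 0 := (hGpos t).ne'
        rw [hsdef]; field_simp; ring
      have hL := L1 t s hs0
      rw [hTeq] at hL
      have hcoef : A * s ^ 2 / G t = s / (T - t) := by
        rw [hsdef]
        have : G t ≠ 0 := (hGpos t).ne'
        field_simp
      rw [hcoef] at hL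
      have hslope : (φ T - φ t) / (T - t) ≤ c + ε := by
        have h9 := abs_le.mp hfar
        have := h9.2
        linarith
      have hspos : 0 < s := div_pos hk hTt
      calc φ (t + s) - φ t = s / (T - t) * (φ T - φ t) := hL
        _ = ((φ T - φ t) / (T - t)) * s := by ring
        _ ≤ (c + ε) * s := mul_le_mul_of_nonneg_right hslope hspos.le
  -- boundedness of far-field slopes
  have ubd : ∃ b, ∀ᶠ T in atTop, φ T / T ≤ b := by
    by_contra hcon
    push_neg at hcon
    have hfr : ∀ b : ℝ, ∃ᶠ T in atTop, b < φ T / T := by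
      intro b
      have := hcon b
      exact this
    have hall : ∀ c : ℝ, c * 1 ≤ φ 1 - φ 0 := by
      intro c
      have hH := build (c + 1) 1 one_pos (hfr (c + 1))
      have := aux_dini φ hφc c (by
        intro t δ hδ
        obtain ⟨s, h1', h2', h3'⟩ := hH t δ hδ
        exact ⟨s, h1', h2', by simpa using h3'⟩) 0 1 (by norm_num)
      simpa using this
    have := hall (φ 1 - φ 0 + 1)
    linarith
  have lbd : ∃ b, ∀ᶠ T in atTop, b ≤ φ T / T := by
    by_contra hcon
    push_neg at hcon
    have hfr : ∀ b : ℝ, ∃ᶠ T in atTop, φ T / T < b := by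
      intro b
      have := hcon b
      exact this
    have hall : ∀ c : ℝ, φ 1 - φ 0 ≤ c * 1 := by
      intro c
      have hH := buildLo (c - 1) 1 one_pos (hfr (c - 1))
      have hdual := aux_dini (fun t => -φ t) (hφc.neg) (-c) (by
        intro t δ hδ
        obtain ⟨s, h1', h2', h3'⟩ := hH t δ hδ
        refine ⟨s, h1', h2', ?_⟩
        have : φ (t + s) - φ t ≤ c * s := by linarith [h3']
        linarith) 0 1 (by norm_num)
      linarith [hdual]
    have := hall (φ 1 - φ 0 - 1)
    linarith
  obtain ⟨bu, hbu⟩ := ubd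
  obtain ⟨bl, hbl⟩ := lbd
  have hBddAbove : Filter.IsBoundedUnder (· ≤ ·) atTop (fun T => φ T / T) := ⟨bu, hbu⟩
  have hBddBelow : Filter.IsBoundedUnder (· ≥ ·) atTop (fun T => φ T / T) := ⟨bl, hbl⟩
  set p := Filter.limsup (fun T => φ T / T) atTop with hpdef
  have hconc : ∀ a b : ℝ, a ≤ b → φ b - φ a = p * (b - a) := by
    intro a b hab
    rcases eq_or_lt_of_le hab with rfl | hlt
    · simp
    have upper : ∀ ε : ℝ, 0 < ε → φ b - φ a ≤ (p + 2 * ε) * (b - a) := by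
      intro ε hε
      have hev : ∀ᶠ T in atTop, φ T / T < p + ε :=
        Filter.eventually_lt_of_limsup_lt (by linarith) hBddAbove
      have hH := buildLo (p + ε) ε hε hev.frequently
      have hdual := aux_dini (fun t => -φ t) (hφc.neg) (-(p + 2*ε)) (by
        intro t δ hδ
        obtain ⟨s, h1', h2', h3'⟩ := hH t δ hδ
        refine ⟨s, h1', h2', ?_⟩
        have : (p + ε + ε) * s = (p + 2*ε) * s := by ring
        rw [this] at h3'
        linarith) a b hab
      linarith [hdual]
    have lower : ∀ ε : ℝ, 0 < ε → (p - 2 * ε) * (b - a) ≤ φ b - φ a := by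
      intro ε hε
      have hcb : Filter.IsCoboundedUnder (· ≤ ·) atTop (fun T => φ T / T) :=
        hBddBelow.isCoboundedUnder_le
      have hfr : ∃ᶠ T in atTop, p - ε < φ T / T :=
        Filter.frequently_lt_of_lt_limsup hcb (by linarith)
      have hH := build (p - ε) ε hε hfr
      have := aux_dini φ hφc (p - 2*ε) (by
        intro t δ hδ
        obtain ⟨s, h1', h2', h3'⟩ := hH t δ hδ
        refine ⟨s, h1', h2', ?_⟩
        have : (p - ε - ε) * s = (p - 2*ε) * s := by ring
        rw [this] at h3'
        exact h3') a b hab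
      exact this
    have hd : 0 < b - a := by linarith
    have hdne : b - a ≠ 0 := hd.ne'
    have h10 : φ b - φ a ≤ p * (b - a) := by
      apply le_of_forall_pos_le_add
      intro ε' hε'
      have hu := upper (ε' / (2 * (b - a))) (by positivity)
      calc φ b - φ a ≤ (p + 2 * (ε' / (2 * (b - a)))) * (b - a) := hu
        _ = p * (b - a) + ε' := by field_simp
    have h12 : p * (b - a) ≤ φ b - φ a := by
      apply le_of_forall_pos_le_add
      intro ε' hε'
      have hu := lower (ε' / (2 * (b - a))) (by positivity)
      calc p * (b - a) = (p - 2 * (ε' / (2 * (b - a)))) * (b - a) + ε' := by field_simp; ring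
        _ ≤ (φ b - φ a) + ε' := by linarith [hu]
    linarith
  refine ⟨p, fun t => ?_⟩
  have hφ0 : φ 0 = G 0 := by simp [hφdef]
  rcases le_or_gt 0 t with ht | ht
  · have := hconc 0 t ht
    simp only [hφdef] at this hφ0 ⊢
    nlinarith [this]
  · have := hconc t 0 ht.le
    simp only [hφdef] at this hφ0 ⊢
    nlinarith [this]

lemma aux_wne (x y : ℝ) (hx : x ≠ 0) : ((x : ℂ) + Complex.I * (y : ℂ)) ≠ 0 := by
  intro h
  have h2 := congrArg Complex.re h
  simp at h2
  exact hx h2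

set_option maxHeartbeats 1000000 in
/-- the t-derivative identity and the resulting representation
f(z,t) = (F(z)² + α^{−4/ν} t²)^{−ν/4}. -/
theorem t_derivative_and_representation (n : ℕ) (hn : 1 ≤ n) (ν : ℝ) (hν : 0 < ν)
    (f : Heis n → ℝ) (hcont : Continuous f) (hpos : ∀ p, 0 < f p)
    (hmax : ∀ p, f p ≤ f 0)
    (α : ℝ) (hα : 0 < α)
    (hlim : Tendsto (fun ζ => korNorm ζ ^ ν * f ζ) (atInftyH n) (nhds α))
    (β : ℝ) (hβ : β = α ^ (2 / ν) * f 0 ^ (-(2 / ν)))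
    (hsym : ∀ ξ : Heis n, ∃ lam : ℝ, 0 < lam ∧
      ∀ ζ : Heis n, ζ ≠ ξ → (lam / dH ξ ζ) ^ ν * f (Phi ξ lam β ζ) = f ζ) :
    (∀ ξ : Heis n, HasDerivAt (fun s : ℝ => f (ξ.1, s))
      (-(ν / 2) * α ^ (-(4 / ν)) * ξ.2 * f ξ ^ (1 + 4 / ν)) ξ.2) ∧
    ∃ F : (Fin n → ℂ) → ℝ, ∀ (z : Fin n → ℂ) (t : ℝ),
      f (z, t) = (F z ^ 2 + α ^ (-(4 / ν)) * t ^ 2) ^ (-(ν / 4)) := by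
  classical
  have hνne : ν ≠ 0 := hν.ne'
  set A := α ^ (-(4 / ν)) with hAdef
  have hA : 0 < A := Real.rpow_pos_of_pos hα _
  set g : Heis n → ℝ := fun p => f p ^ (-(4 / ν)) with hgdef
  have hgpos : ∀ p, 0 < g p := fun p => Real.rpow_pos_of_pos (hpos p) _
  have hgc : Continuous g := hcont.rpow_const (fun p => Or.inl (hpos p).ne')
  have hfg : ∀ p, f p = g p ^ (-(ν / 4)) := by
    intro p
    rw [hgdef]
    simp only
    rw [← Real.rpow_mul (hpos p).le]
    rw [show (-(4 / ν)) * (-(ν / 4)) = 1 by field_simp, Real.rpow_one]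
  -- growth along vertical lines
  have growth : ∀ z' : Fin n → ℂ,
      Tendsto (fun T => g (z', T) / ((nsq z') ^ 2 + T ^ 2)) atTop (nhds A) := by
    intro z'
    have hpath : Tendsto (fun T : ℝ => ((z', T) : Heis n)) atTop (atInftyH n) := by
      rw [atInftyH, tendsto_comap_iff]
      have h1 : Tendsto (fun T : ℝ => (nsq z') ^ 2 + T ^ 2) atTop atTop :=
        tendsto_atTop_add_const_left _ _ (tendsto_pow_atTop two_ne_zero)
      exact ((tendsto_rpow_atTop (by norm_num : (0:ℝ) < 1/4)).comp h1).congr (fun T => rfl)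
    have h1 : Tendsto (fun T : ℝ => korNorm ((z', T) : Heis n) ^ ν * f (z', T)) atTop (nhds α) :=
      hlim.comp hpath
    have h2 := h1.rpow_const (p := -(4 / ν)) (Or.inl hα.ne')
    rw [← hAdef] at h2
    apply h2.congr'
    filter_upwards [eventually_gt_atTop (0:ℝ)] with T hT
    have hB : (0:ℝ) < (nsq z') ^ 2 + T ^ 2 := by positivity
    have hkor : korNorm ((z', T) : Heis n) = ((nsq z') ^ 2 + T ^ 2) ^ ((1:ℝ)/4) := rfl
    have hkpos : 0 < korNorm ((z', T) : Heis n) := by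
      rw [hkor]; exact Real.rpow_pos_of_pos hB _
    rw [Real.mul_rpow (Real.rpow_nonneg hkpos.le ν) (hpos _).le]
    rw [← Real.rpow_mul hkpos.le]
    rw [show ν * (-(4 / ν)) = -4 by field_simp]
    rw [hkor, ← Real.rpow_mul hB.le]
    norm_num
    rw [Real.rpow_neg_one]
    rw [inv_mul_eq_div]
  -- master facts for each center
  have master : ∀ ξ : Heis n, ∃ lam : ℝ, 0 < lam ∧ A * lam ^ 4 = g ξ ∧
      (∀ s : ℝ, s ≠ 0 → g (ξ.1, ξ.2 + s) = s ^ 2 / lam ^ 4 * g (ξ.1, ξ.2 + lam ^ 4 / s)) ∧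
      (∀ ζ : Heis n, ζ ≠ ξ → (lam / dH ξ ζ) ^ ν * f (Phi ξ lam β ζ) = f ζ) := by
    intro ξ
    obtain ⟨lam, hlam, hid⟩ := hsym ξ
    have vert : ∀ s : ℝ, s ≠ 0 →
        g (ξ.1, ξ.2 + s) = s ^ 2 / lam ^ 4 * g (ξ.1, ξ.2 + lam ^ 4 / s) := by
      intro s hs
      have hne : hmul ξ ((0 : Fin n → ℂ), s) ≠ ξ := by
        rw [aux_hmul_vert]
        intro hcon
        have := congrArg Prod.snd hcon
        simp only at this
        exact hs (by linarith)
      have hI := hid _ hne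
      rw [aux_PhiVert ξ lam β s hs, aux_dH_vert, aux_hmul_vert, aux_hmul_vert] at hI
      have hs2 : (0:ℝ) < s ^ 2 := by positivity
      have hd : (0:ℝ) < (s ^ 2) ^ ((1:ℝ)/4) := Real.rpow_pos_of_pos hs2 _
      have hL : 0 < lam / (s ^ 2) ^ ((1:ℝ)/4) := div_pos hlam hd
      have hgl : g (ξ.1, ξ.2 + s)
          = ((lam / (s ^ 2) ^ ((1:ℝ)/4)) ^ ν * f (ξ.1, ξ.2 + lam ^ 4 / s)) ^ (-(4/ν)) := by
        rw [hI, hgdef]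
      rw [Real.mul_rpow (Real.rpow_nonneg hL.le ν) (hpos _).le] at hgl
      rw [← Real.rpow_mul hL.le] at hgl
      rw [show ν * (-(4 / ν)) = -4 by field_simp] at hgl
      have hL4 : (lam / (s ^ 2) ^ ((1:ℝ)/4)) ^ (-4 : ℝ) = s ^ 2 / lam ^ 4 := by
        rw [show (-4 : ℝ) = -(4:ℕ) by norm_num, Real.rpow_neg hL.le, Real.rpow_natCast]
        rw [div_pow]
        rw [show ((s ^ 2) ^ ((1:ℝ)/4)) ^ (4:ℕ) = s ^ 2 by
          rw [← Real.rpow_natCast ((s ^ 2) ^ ((1:ℝ)/4)) 4, ← Real.rpow_mul hs2.le]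
          norm_num]
        rw [inv_div]
      rw [hL4] at hgl
      exact hgl
    -- the value of lam
    have hval : A * lam ^ 4 = g ξ := by
      have hlam4 : (0:ℝ) < lam ^ 4 := by positivity
      have hcl : Continuous (fun x : ℝ => g (ξ.1, x)) :=
        hgc.comp (continuous_const.prodMk continuous_id)
      have lim2 : Tendsto (fun s : ℝ => g (ξ.1, ξ.2 + lam ^ 4 / s)) atTop (nhds (g (ξ.1, ξ.2))) := by
        have harg : Tendsto (fun s : ℝ => ξ.2 + lam ^ 4 / s) atTop (nhds (ξ.2 + 0)) :=
          tendsto_const_nhds.add (tendsto_const_nhds.div_atTop tendsto_id)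
        rw [add_zero] at harg
        exact (hcl.tendsto _).comp harg
      have lim1 : Tendsto (fun s : ℝ => lam ^ 4 / s ^ 2 * g (ξ.1, ξ.2 + s)) atTop
          (nhds (A * lam ^ 4)) := by
        have hshift : Tendsto (fun s : ℝ => g (ξ.1, ξ.2 + s) / ((nsq ξ.1) ^ 2 + (ξ.2 + s) ^ 2))
            atTop (nhds A) :=
          (growth ξ.1).comp (tendsto_atTop_add_const_left _ _ tendsto_id)
        have hrat : Tendsto (fun s : ℝ => ((nsq ξ.1) ^ 2 + (ξ.2 + s) ^ 2) / s ^ 2) atTop (nhds 1) := by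
          have e1 : Tendsto (fun s : ℝ => ((nsq ξ.1) ^ 2 + ξ.2 ^ 2) / s ^ 2
              + (2 * ξ.2 / s + 1)) atTop (nhds (0 + (0 + 1))) := by
            refine Tendsto.add (tendsto_const_nhds.div_atTop (tendsto_pow_atTop two_ne_zero)) ?_
            exact Tendsto.add_const 1 ((tendsto_const_nhds.div_atTop tendsto_id))
          norm_num at e1
          apply e1.congr'
          filter_upwards [eventually_gt_atTop (0:ℝ)] with s hsp
          field_simp
          ring
        have h2' := (hshift.mul hrat).const_mul (lam ^ 4)
        rw [mul_one, mul_comm (lam ^ 4) A] at h2'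
        apply h2'.congr'
        filter_upwards [eventually_gt_atTop (0:ℝ), eventually_gt_atTop (1 - ξ.2)] with s hsp hsp2
        have hs2 : s ^ 2 ≠ 0 := by positivity
        have hNT : (nsq ξ.1) ^ 2 + (ξ.2 + s) ^ 2 ≠ 0 := by
          have h0 := aux_nsq_nonneg ξ.1
          nlinarith
        field_simp
      have lim1' : Tendsto (fun s : ℝ => g (ξ.1, ξ.2 + lam ^ 4 / s)) atTop (nhds (A * lam ^ 4)) := by
        apply lim1.congr'
        filter_upwards [eventually_gt_atTop (0:ℝ)] with s hsp
        rw [vert s hsp.ne']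
        have hl4 : lam ^ 4 ≠ 0 := by positivity
        have hs2 : s ^ 2 ≠ 0 := by positivity
        field_simp
      have heq := tendsto_nhds_unique lim1' lim2
      rw [heq]
    exact ⟨lam, hlam, hval, vert, hid⟩
  choose lamf hlamf hval hvert hraw using master
  have lineStruct : ∀ z' : Fin n → ℂ, ∃ p : ℝ, ∀ t, g (z', t) = A * t ^ 2 + p * t + g (z', 0) := by
    intro z'
    have hGc : Continuous (fun t : ℝ => g (z', t)) :=
      hgc.comp (continuous_const.prodMk continuous_id)
    have hGpos : ∀ t : ℝ, 0 < g (z', t) := fun t => hgpos _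
    have leq : ∀ t₀ s : ℝ, s ≠ 0 → g (z', t₀ + s)
        = s ^ 2 / (g (z', t₀) / A) * g (z', t₀ + g (z', t₀) / A / s) := by
      intro t₀ s hs
      have h2 := hval ((z', t₀) : Heis n)
      have h3 : lamf ((z', t₀) : Heis n) ^ 4 = g (z', t₀) / A := by
        rw [eq_div_iff hA.ne']
        linarith [h2]
      have h1 : g (z', t₀ + s) = s ^ 2 / lamf ((z', t₀) : Heis n) ^ 4
          * g (z', t₀ + lamf ((z', t₀) : Heis n) ^ 4 / s) := hvert ((z', t₀) : Heis n) s hs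
      rw [h1, h3]
    exact aux_linear A hA ((nsq z') ^ 2) (by positivity) (fun t => g (z', t)) hGc hGpos
      (growth z') leq
  choose M hM using lineStruct
  -- max at origin forces M 0 = 0
  have hg0le : ∀ p : Heis n, g 0 ≤ g p := by
    intro p
    rw [hgdef]
    simp only
    have h1 := hmax p
    have h2 : f p ^ (4 / ν) ≤ f 0 ^ (4 / ν) :=
      Real.rpow_le_rpow (hpos p).le h1 (by positivity)
    rw [Real.rpow_neg (hpos 0).le, Real.rpow_neg (hpos p).le]
    exact inv_anti₀ (Real.rpow_pos_of_pos (hpos p) _) h2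
  have hM0 : M 0 = 0 := by
    have hq : ∀ t : ℝ, 0 ≤ A * t ^ 2 + M 0 * t := by
      intro t
      have h1 := hM 0 t
      have h2 := hg0le (((0 : Fin n → ℂ), t) : Heis n)
      have h3 : g (0 : Heis n) = g (((0 : Fin n → ℂ), (0:ℝ)) : Heis n) := rfl
      rw [h3] at h2
      have h4 := hM 0 0
      nlinarith [h1, h2, h4]
    have h4 := hq (-(M 0) / (2 * A))
    have e : A * (-(M 0) / (2 * A)) ^ 2 + M 0 * (-(M 0) / (2 * A)) = -(M 0 ^ 2) / (4 * A) := by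
      field_simp
      ring
    rw [e, neg_div] at h4
    have h5 : M 0 ^ 2 ≤ 0 := by
      by_contra hh
      push_neg at hh
      have : 0 < M 0 ^ 2 / (4 * A) := div_pos hh (by linarith)
      linarith
    have h6 : M 0 ^ 2 = 0 := le_antisymm h5 (sq_nonneg _)
    exact pow_eq_zero_iff two_ne_zero |>.mp h6
  -- Step G : M vanishes everywhere
  have MG : ∀ z₀ : Fin n → ℂ, M z₀ = 0 := by
    intro z₀
    set y := nsq z₀ with hy
    have hy0 : 0 ≤ y := aux_nsq_nonneg z₀
    set b := M z₀ / A with hb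
    set c' := g (z₀, 0) / A with hc
    have hk : ∀ t₀ : ℝ, lamf ((z₀, t₀) : Heis n) ^ 4 = t₀ ^ 2 + b * t₀ + c' := by
      intro t₀
      have h1 := hval ((z₀, t₀) : Heis n)
      have h2 := hM z₀ t₀
      rw [hb, hc]
      field_simp
      nlinarith [h1, h2]
    have hkq : Tendsto (fun t₀ : ℝ => (t₀ ^ 2 + b * t₀ + c') / t₀ ^ 2) atTop (nhds 1) := by
      have e1 : Tendsto (fun t₀ : ℝ => 1 + (b / t₀ + c' / t₀ ^ 2)) atTop (nhds (1 + (0 + 0))) := by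
        refine tendsto_const_nhds.add (Tendsto.add ?_ ?_)
        · exact tendsto_const_nhds.div_atTop tendsto_id
        · exact tendsto_const_nhds.div_atTop (tendsto_pow_atTop two_ne_zero)
      norm_num at e1
      apply e1.congr'
      filter_upwards [eventually_gt_atTop (0:ℝ)] with t₀ h
      have ht0 : t₀ ≠ 0 := h.ne'
      field_simp
      ring
    have hlam2 : Tendsto (fun t₀ : ℝ => lamf ((z₀, t₀) : Heis n) ^ 2 / t₀) atTop (nhds 1) := by
      have e1 : Tendsto (fun t₀ : ℝ => Real.sqrt ((t₀ ^ 2 + b * t₀ + c') / t₀ ^ 2)) atTop (nhds 1) := by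
        have e2 := (Real.continuous_sqrt.tendsto 1).comp hkq
        simpa [Function.comp_def] using e2
      apply e1.congr'
      filter_upwards [eventually_gt_atTop (0:ℝ)] with t₀ h
      rw [← hk t₀]
      rw [Real.sqrt_div (by positivity) _]
      congr 1
      · rw [show lamf ((z₀, t₀) : Heis n) ^ 4 = (lamf ((z₀, t₀) : Heis n) ^ 2) ^ 2 by ring,
          Real.sqrt_sq (sq_nonneg _)]
      · rw [Real.sqrt_sq h.le]
    have hargW : Tendsto (fun t₀ : ℝ => (wC ((z₀, t₀) : Heis n) + Complex.I * (β : ℂ)).arg)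
        atTop (nhds 0) := by
      have hWeq : ∀ t₀ : ℝ, 0 < t₀ → (wC ((z₀, t₀) : Heis n) + Complex.I * (β : ℂ))
          = (t₀ : ℂ) * (1 + Complex.I * (((y + β) / t₀ : ℝ) : ℂ)) := by
        intro t₀ h
        have hwc : wC ((z₀, t₀) : Heis n) = (t₀ : ℂ) + Complex.I * ((y : ℝ) : ℂ) := rfl
        rw [hwc]
        have ht : (t₀ : ℂ) ≠ 0 := by exact_mod_cast h.ne'
        push_cast
        field_simp
        ring
      have inner : Tendsto (fun t₀ : ℝ => 1 + Complex.I * (((y + β) / t₀ : ℝ) : ℂ)) atTop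
          (nhds (1 : ℂ)) := by
        have h0 : Tendsto (fun t₀ : ℝ => ((y + β) / t₀ : ℝ)) atTop (nhds 0) :=
          tendsto_const_nhds.div_atTop tendsto_id
        have h1 := (Complex.continuous_ofReal.tendsto 0).comp h0
        have h2 := (tendsto_const_nhds (x := (1:ℂ))).add
          ((tendsto_const_nhds (x := Complex.I)).mul h1)
        simpa using h2
      have harg1 : ContinuousAt Complex.arg 1 :=
        Complex.continuousAt_arg Complex.one_mem_slitPlane
      have h3 := harg1.tendsto.comp inner
      rw [Complex.arg_one] at h3
      apply h3.congr'
      filter_upwards [eventually_gt_atTop (0:ℝ)] with t₀ h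
      rw [hWeq t₀ h, Complex.arg_real_mul _ h]
      rfl
    -- the symmetry on the central axis
    have hsymline : ∀ t : ℝ, f (((0 : Fin n → ℂ), t) : Heis n)
        = f (((0 : Fin n → ℂ), -t - b) : Heis n) := by
      intro t
      have hwt : Tendsto (fun t₀ : ℝ => ((((t₀ - t : ℝ)) : ℂ) + Complex.I * ((y : ℝ) : ℂ)) / (t₀ : ℂ))
          atTop (nhds 1) := by
        have h1 : Tendsto (fun t₀ : ℝ => ((t₀ - t) / t₀ : ℝ)) atTop (nhds 1) := by
          have e1 : Tendsto (fun t₀ : ℝ => 1 - t / t₀) atTop (nhds (1 - 0)) :=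
            tendsto_const_nhds.sub (tendsto_const_nhds.div_atTop tendsto_id)
          norm_num at e1
          apply e1.congr'
          filter_upwards [eventually_gt_atTop (0:ℝ)] with t₀ h
          have ht0 : t₀ ≠ 0 := h.ne'
          field_simp
        have h2 : Tendsto (fun t₀ : ℝ => (y / t₀ : ℝ)) atTop (nhds 0) :=
          tendsto_const_nhds.div_atTop tendsto_id
        have h3 := ((Complex.continuous_ofReal.tendsto 1).comp h1).add
          ((tendsto_const_nhds (x := Complex.I)).mul ((Complex.continuous_ofReal.tendsto 0).comp h2))
        norm_num at h3
        apply h3.congr'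
        filter_upwards [eventually_gt_atTop (max 0 t)] with t₀ h
        have ht0 : t₀ ≠ 0 := (lt_of_le_of_lt (le_max_left 0 t) h).ne'
        have htC : (t₀ : ℂ) ≠ 0 := by exact_mod_cast ht0
        push_cast
        field_simp
      have hu : Tendsto (fun t₀ : ℝ => auxU n z₀ t₀ t (lamf ((z₀, t₀) : Heis n)) β) atTop
          (nhds 1) := by
        have hexp : Tendsto (fun t₀ : ℝ => Complex.exp (Complex.I *
            (((wC ((z₀, t₀) : Heis n) + Complex.I * (β : ℂ)).arg : ℝ) : ℂ))) atTop (nhds 1) := by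
          have h3 := (Complex.continuous_ofReal.tendsto 0).comp hargW
          have h4 : Tendsto (fun t₀ : ℝ => Complex.I *
              (((wC ((z₀, t₀) : Heis n) + Complex.I * (β : ℂ)).arg : ℝ) : ℂ)) atTop
              (nhds 0) := by
            simpa using (tendsto_const_nhds (x := Complex.I)).mul h3
          have h5 := (Complex.continuous_exp.tendsto 0).comp h4
          rw [Complex.exp_zero] at h5
          exact h5
        have hnum := ((Complex.continuous_ofReal.tendsto 1).comp hlam2).mul hexp
        rw [mul_one] at hnum
        have hdiv := hnum.div hwt one_ne_zero
        rw [div_one] at hdiv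
        apply hdiv.congr'
        filter_upwards [eventually_gt_atTop (max 0 t)] with t₀ h
        have ht0 : t₀ ≠ 0 := (lt_of_le_of_lt (le_max_left 0 t) h).ne'
        have htt : t < t₀ := lt_of_le_of_lt (le_max_right 0 t) h
        have htC : (t₀ : ℂ) ≠ 0 := by exact_mod_cast ht0
        have hwne : (((t₀ - t : ℝ) : ℂ) + Complex.I * ((y : ℝ) : ℂ)) ≠ 0 :=
          aux_wne (t₀ - t) y (by linarith)
        rw [auxU]
        simp only [Pi.div_apply, Function.comp_apply]
        push_cast
        field_simp
        rfl
      have him : Tendsto (fun t₀ : ℝ => (auxU n z₀ t₀ t (lamf ((z₀, t₀) : Heis n)) β).im)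
          atTop (nhds 0) := by
        have h1 := (Complex.continuous_im.tendsto 1).comp hu
        simpa [Function.comp_def] using h1
      have hzpart : Tendsto (fun t₀ : ℝ =>
          (fun j => (1 - auxU n z₀ t₀ t (lamf ((z₀, t₀) : Heis n)) β) * z₀ j)) atTop
          (nhds (0 : Fin n → ℂ)) := by
        rw [tendsto_pi_nhds]
        intro j
        have h1 := ((tendsto_const_nhds (x := (1:ℂ))).sub hu).mul_const (z₀ j)
        norm_num at h1
        exact h1
      have hmain : Tendsto (fun t₀ : ℝ =>
          t₀ - lamf ((z₀, t₀) : Heis n) ^ 4 * (t₀ - t) / ((t₀ - t) ^ 2 + y ^ 2)) atTop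
          (nhds (-t - b)) := by
        have hnum : Tendsto (fun t₀ : ℝ =>
            (-t - b) + ((t ^ 2 + y ^ 2 + b * t - c') / t₀ + c' * t / t₀ ^ 2)) atTop
            (nhds ((-t - b) + (0 + 0))) := by
          refine tendsto_const_nhds.add (Tendsto.add ?_ ?_)
          · exact tendsto_const_nhds.div_atTop tendsto_id
          · exact tendsto_const_nhds.div_atTop (tendsto_pow_atTop two_ne_zero)
        norm_num at hnum
        have hden : Tendsto (fun t₀ : ℝ => (1 - t / t₀) ^ 2 + y ^ 2 / t₀ ^ 2) atTop
            (nhds ((1 - 0) ^ 2 + 0)) := by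
          refine Tendsto.add ?_ ?_
          · exact (tendsto_const_nhds.sub (tendsto_const_nhds.div_atTop tendsto_id)).pow 2
          · exact tendsto_const_nhds.div_atTop (tendsto_pow_atTop two_ne_zero)
        norm_num at hden
        have hdiv := hnum.div hden one_ne_zero
        rw [div_one] at hdiv
        apply hdiv.congr'
        filter_upwards [eventually_gt_atTop (max 0 t)] with t₀ h
        have ht0 : (0:ℝ) < t₀ := lt_of_le_of_lt (le_max_left 0 t) h
        have htt : t < t₀ := lt_of_le_of_lt (le_max_right 0 t) h
        have hden0 : (t₀ - t) ^ 2 + y ^ 2 ≠ 0 := by nlinarith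
        simp only [Pi.div_apply]
        rw [hk t₀]
        field_simp
        ring
      have hT : Tendsto (fun t₀ : ℝ =>
          t₀ - lamf ((z₀, t₀) : Heis n) ^ 4 * (t₀ - t) / ((t₀ - t) ^ 2 + y ^ 2)
            + 2 * y * (auxU n z₀ t₀ t (lamf ((z₀, t₀) : Heis n)) β).im) atTop
          (nhds (-t - b)) := by
        have h2 := hmain.add (him.const_mul (2 * y))
        norm_num at h2
        apply h2.congr
        intro t₀
        ring
      have hPhi : Tendsto (fun t₀ : ℝ =>
          Phi ((z₀, t₀) : Heis n) (lamf ((z₀, t₀) : Heis n)) β ((0 : Fin n → ℂ), t)) atTop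
          (nhds ((((0 : Fin n → ℂ), -t - b)) : Heis n)) := by
        have h1 := hzpart.prodMk_nhds hT
        apply h1.congr'
        filter_upwards [eventually_gt_atTop (max 0 t)] with t₀ h
        have htt : t < t₀ := lt_of_le_of_lt (le_max_right 0 t) h
        rw [aux_PhiAxis z₀ t₀ t (lamf ((z₀, t₀) : Heis n)) β (by linarith)]
      have hratio : Tendsto (fun t₀ : ℝ =>
          (lamf ((z₀, t₀) : Heis n) / dH ((z₀, t₀) : Heis n) ((0 : Fin n → ℂ), t)) ^ ν) atTop
          (nhds 1) := by
        have hd2 : Tendsto (fun t₀ : ℝ => y ^ 2 / t₀ ^ 2 + (1 - t / t₀) ^ 2) atTop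
            (nhds (0 + (1 - 0) ^ 2)) := by
          refine Tendsto.add ?_ ?_
          · exact tendsto_const_nhds.div_atTop (tendsto_pow_atTop two_ne_zero)
          · exact (tendsto_const_nhds.sub (tendsto_const_nhds.div_atTop tendsto_id)).pow 2
        norm_num at hd2
        have hrin : Tendsto (fun t₀ : ℝ => (t₀ ^ 2 + b * t₀ + c') / t₀ ^ 2
            / (y ^ 2 / t₀ ^ 2 + (1 - t / t₀) ^ 2)) atTop (nhds 1) := by
          have := hkq.div hd2 one_ne_zero
          rw [div_one] at this
          exact this
        have hrin2 : Tendsto (fun t₀ : ℝ => (t₀ ^ 2 + b * t₀ + c') / (y ^ 2 + (t₀ - t) ^ 2))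
            atTop (nhds 1) := by
          apply hrin.congr'
          filter_upwards [eventually_gt_atTop (max 0 t)] with t₀ h
          have ht0 : (0:ℝ) < t₀ := lt_of_le_of_lt (le_max_left 0 t) h
          have htt : t < t₀ := lt_of_le_of_lt (le_max_right 0 t) h
          have hden0 : y ^ 2 + (t₀ - t) ^ 2 ≠ 0 := by nlinarith
          field_simp
        have hr : Tendsto (fun t₀ : ℝ =>
            lamf ((z₀, t₀) : Heis n) / dH ((z₀, t₀) : Heis n) ((0 : Fin n → ℂ), t)) atTop
            (nhds 1) := by
          have h5 := hrin2.rpow_const (p := (1:ℝ)/4) (Or.inr (by norm_num))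
          rw [Real.one_rpow] at h5
          apply h5.congr'
          filter_upwards [eventually_gt_atTop (max 0 t)] with t₀ h
          rw [aux_dH_axis]
          rw [← hk t₀]
          rw [Real.div_rpow (by positivity) (by positivity)]
          rw [aux_rpow_quarter _ (hlamf _)]
        have h6 := hr.rpow_const (p := ν) (Or.inl one_ne_zero)
        rw [Real.one_rpow] at h6
        exact h6
      have hident : ∀ᶠ t₀ : ℝ in atTop,
          (lamf ((z₀, t₀) : Heis n) / dH ((z₀, t₀) : Heis n) ((0 : Fin n → ℂ), t)) ^ ν
            * f (Phi ((z₀, t₀) : Heis n) (lamf ((z₀, t₀) : Heis n)) β ((0 : Fin n → ℂ), t))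
          = f ((0 : Fin n → ℂ), t) := by
        filter_upwards [eventually_gt_atTop t] with t₀ h
        apply hraw ((z₀, t₀) : Heis n) ((0 : Fin n → ℂ), t)
        intro hcon
        have h7 := congrArg Prod.snd hcon
        simp only at h7
        exact h.ne h7
      have hlhs := hratio.mul ((hcont.tendsto _).comp hPhi)
      rw [one_mul] at hlhs
      have hconst := hlhs.congr' hident
      exact (tendsto_nhds_unique hconst tendsto_const_nhds).symm
    -- conclude b = 0
    have hgsym : ∀ t : ℝ, g ((0 : Fin n → ℂ), t) = g ((0 : Fin n → ℂ), -t - b) := by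
      intro t
      rw [hgdef]
      simp only
      rw [hsymline t]
    have hga := hgsym 1
    have hgb := hgsym (-1)
    have e1 := hM 0 1
    have e2 := hM 0 (-1 - b)
    have e3 := hM 0 (-1)
    have e4 := hM 0 (-(-1) - b)
    rw [hM0] at e1 e2 e3 e4
    rw [e1, e2] at hga
    rw [e3, e4] at hgb
    have h4b : A * (4 * b) = 0 := by linear_combination hgb - hga
    rcases mul_eq_zero.mp h4b with h | h
    · exact absurd h hA.ne'
    · have hb0 : b = 0 := by linarith
      rw [hb] at hb0
      field_simp at hb0
      simpa using hb0
  have hrep : ∀ (z' : Fin n → ℂ) (t : ℝ), g (z', t) = A * t ^ 2 + g (z', 0) := by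
    intro z' t
    rw [hM z' t, MG z']
    ring
  constructor
  · intro ξ
    have hfun : (fun s : ℝ => f (ξ.1, s)) = fun s => (A * s ^ 2 + g (ξ.1, 0)) ^ (-(ν / 4)) := by
      funext s
      rw [hfg (ξ.1, s), hrep]
    rw [hfun]
    have hC : 0 < g (ξ.1, 0) := hgpos _
    have hbase : 0 < A * ξ.2 ^ 2 + g (ξ.1, 0) := by positivity
    have hinner : HasDerivAt (fun s : ℝ => A * s ^ 2 + g (ξ.1, 0)) (2 * A * ξ.2) ξ.2 := by
      have h1 := ((hasDerivAt_pow 2 ξ.2).const_mul A).add_const (g (ξ.1, 0))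
      norm_num [-hasDerivAt_add_const_iff] at h1
      refine h1.congr_deriv ?_
      ring
    have houter := hinner.rpow_const (p := -(ν / 4)) (Or.inl hbase.ne')
    convert houter using 1
    have hfξ : f ξ = (A * ξ.2 ^ 2 + g (ξ.1, 0)) ^ (-(ν / 4)) := by
      conv_lhs => rw [show ξ = (ξ.1, ξ.2) from rfl]
      rw [hfg (ξ.1, ξ.2), hrep]
    rw [hfξ]
    rw [← Real.rpow_mul hbase.le]
    rw [show (-(ν / 4)) * (1 + 4 / ν) = -(ν / 4) - 1 by field_simp; ring]
    ring
  · refine ⟨fun z => Real.sqrt (g (z, 0)), fun z t => ?_⟩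
    rw [hfg (z, t), hrep]
    rw [Real.sq_sqrt (hgpos (((z, 0)) : Heis n)).le]
    congr 1
    ring
end
end

section
/- Let n ≥ 1, ν > 0, and let f : ℍⁿ → ℝ be continuous, positive, attaining its maximum at the origin, with α := lim_{|ζ|_H→∞} |ζ|_H^ν f(ζ) existing and positive, β := α^{2/ν} f(0)^{−2/ν}, and such that for every ξ ∈ ℍⁿ there exists λ(ξ) > 0 with (λ(ξ)/d_H(ξ,ζ))^ν · f(Φ_{ξ,λ(ξ)}^β(ζ)) = f(ζ) for all ζ ≠ ξ. Then for each k = 1,…,n and each z ∈ ℂⁿ with z_k = x_k + i y_k, the partial derivatives of f(·,0) in x_k and y_k exist at (z,0) and satisfy ∂f/∂x_k (z,0) = −ν · α^{−2/ν} · x_k · f(z,0)^{1+2/ν} and ∂f/∂y_k (z,0) = −ν · α^{−2/ν} · y_k · f(z,0)^{1+2/ν}. -/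
open Complex Filter Topology MeasureTheory

noncomputable section

namespace HeisPf
open Heis

variable {n : ℕ}

/-- fourth power of the Korányi norm -/
def K4 (a : Heis n) : ℝ := nsq a.1 ^ 2 + a.2 ^ 2

lemma nsq_nonneg (z : Fin n → ℂ) : 0 ≤ nsq z :=
  Finset.sum_nonneg fun j _ => Complex.normSq_nonneg _

lemma K4_nonneg (a : Heis n) : 0 ≤ K4 a := add_nonneg (sq_nonneg _) (sq_nonneg _)

lemma nsq_eq_zero_iff {z : Fin n → ℂ} : nsq z = 0 ↔ z = 0 := by
  constructor
  · intro h
    funext j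
    have := (Finset.sum_eq_zero_iff_of_nonneg (fun j _ => Complex.normSq_nonneg (z j))).1 h j
      (Finset.mem_univ j)
    exact Complex.normSq_eq_zero.1 this
  · intro h; subst h; simp [nsq]

lemma K4_eq_zero_iff {a : Heis n} : K4 a = 0 ↔ a = 0 := by
  constructor
  · intro h
    unfold K4 at h
    have h1 : nsq a.1 ^ 2 = 0 ∧ a.2 ^ 2 = 0 := by
      constructor <;> nlinarith [sq_nonneg (nsq a.1), sq_nonneg a.2]
    have hz : a.1 = 0 := nsq_eq_zero_iff.1 (by nlinarith [h1.1])
    have ht : a.2 = 0 := by nlinarith [h1.2]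
    exact Prod.ext hz ht
  · intro h; subst h; simp [K4, nsq]

lemma K4_pos {a : Heis n} (h : a ≠ 0) : 0 < K4 a :=
  lt_of_le_of_ne (K4_nonneg a) (fun e => h (K4_eq_zero_iff.1 e.symm))

lemma korNorm_eq (a : Heis n) : korNorm a = K4 a ^ ((1:ℝ)/4) := rfl

lemma korNorm_nonneg (a : Heis n) : 0 ≤ korNorm a := Real.rpow_nonneg (K4_nonneg a) _

lemma korNorm_pow4 (a : Heis n) : korNorm a ^ (4:ℕ) = K4 a := by
  rw [korNorm_eq, ← Real.rpow_natCast (K4 a ^ ((1:ℝ)/4)) 4, ← Real.rpow_mul (K4_nonneg a)]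
  norm_num

lemma korNorm_pos {a : Heis n} (h : a ≠ 0) : 0 < korNorm a :=
  Real.rpow_pos_of_pos (K4_pos h) _

lemma korNorm_zero : korNorm (0 : Heis n) = 0 := by
  rw [korNorm_eq]
  have : K4 (0 : Heis n) = 0 := K4_eq_zero_iff.2 rfl
  rw [this]
  exact Real.zero_rpow (by norm_num)

/- hermInner basics -/

lemma hermInner_add_right (x y w : Fin n → ℂ) :
    hermInner x (y + w) = hermInner x y + hermInner x w := by
  simp [hermInner, mul_add, Finset.sum_add_distrib]

lemma hermInner_add_left (x y w : Fin n → ℂ) :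
    hermInner (x + y) w = hermInner x w + hermInner y w := by
  simp [hermInner, add_mul, Finset.sum_add_distrib]

lemma hermInner_neg_left (x w : Fin n → ℂ) : hermInner (-x) w = - hermInner x w := by
  simp [hermInner, Finset.sum_neg_distrib]

lemma hermInner_zero_right (x : Fin n → ℂ) : hermInner x 0 = 0 := by
  simp [hermInner]

lemma hermInner_zero_left (x : Fin n → ℂ) : hermInner 0 x = 0 := by
  simp [hermInner]

lemma hermInner_conj (x w : Fin n → ℂ) :
    (starRingEnd ℂ) (hermInner x w) = hermInner w x := by
  simp [hermInner, map_sum, mul_comm]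

lemma hermInner_self_im (x : Fin n → ℂ) : (hermInner x x).im = 0 := by
  have : hermInner x x = ((nsq x : ℝ) : ℂ) := by
    simp [hermInner, nsq, Complex.mul_conj]
  rw [this]; simp

lemma hermInner_im_comm (x w : Fin n → ℂ) : (hermInner w x).im = - (hermInner x w).im := by
  rw [← hermInner_conj]; simp

lemma hermInner_single_right (x : Fin n → ℂ) (k : Fin n) (a : ℂ) :
    hermInner x (Pi.single k a) = x k * (starRingEnd ℂ) a := by
  unfold hermInner
  rw [Finset.sum_eq_single k]
  · simp
  · intro j _ hj; simp [Pi.single_eq_of_ne hj]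
  · intro h; exact absurd (Finset.mem_univ k) h

/- group basics -/

lemma hmul_zero_right (a : Heis n) : hmul a 0 = a := by
  simp [hmul, hermInner_zero_right]

lemma hmul_zero_left (a : Heis n) : hmul 0 a = a := by
  simp [hmul, hermInner_zero_left]

lemma hmul_assoc (a b c : Heis n) : hmul (hmul a b) c = hmul a (hmul b c) := by
  unfold hmul
  refine Prod.ext (add_assoc _ _ _) ?_
  simp only [hermInner_add_left, hermInner_add_right, Complex.add_im]
  ring

lemma hinv_hmul_cancel (a : Heis n) : hmul (hinv a) a = 0 := by
  unfold hmul hinv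
  refine Prod.ext (by simp) ?_
  simp [hermInner_neg_left, hermInner_self_im]

lemma hmul_hinv_cancel (a : Heis n) : hmul a (hinv a) = 0 := by
  unfold hmul hinv
  refine Prod.ext (by simp) ?_
  have : hermInner a.1 (-a.1) = - hermInner a.1 a.1 := by
    have := hermInner_conj a.1 (-a.1)
    simp [hermInner, mul_neg, map_neg, Finset.sum_neg_distrib]
  simp [this, hermInner_self_im]

lemma hinv_hmul (a b : Heis n) : hinv (hmul a b) = hmul (hinv b) (hinv a) := by
  unfold hmul hinv
  refine Prod.ext (by simp [neg_add]) ?_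
  simp only []
  have h1 : hermInner (-b.1) (-a.1) = hermInner b.1 a.1 := by
    simp [hermInner, mul_neg, map_neg]
  rw [h1, hermInner_im_comm a.1 b.1]
  ring

lemma hmul_cancel_left (a b : Heis n) : hmul a (hmul (hinv a) b) = b := by
  rw [← hmul_assoc, hmul_hinv_cancel, hmul_zero_left]

lemma hinv_cancel_left (a b : Heis n) : hmul (hinv a) (hmul a b) = b := by
  rw [← hmul_assoc, hinv_hmul_cancel, hmul_zero_left]

lemma K4_hinv (a : Heis n) : K4 (hinv a) = K4 a := by
  simp [K4, hinv, nsq]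

lemma korNorm_hinv (a : Heis n) : korNorm (hinv a) = korNorm a := by
  rw [korNorm_eq, korNorm_eq, K4_hinv]

end HeisPf
namespace HeisPf
open Heis

variable {n : ℕ}

/-- The core of the generalized CR inversion. -/
def Kmap (ξ : Heis n) (lam β : ℝ) (a : Heis n) : Heis n :=
  rot (Mmat ξ β) (dil (lam ^ 2) (crInv (iota a)))

lemma Phi_eq (ξ : Heis n) (lam β : ℝ) (ζ : Heis n) :
    Phi ξ lam β ζ = tau ξ (Kmap ξ lam β (hmul (hinv ξ) ζ)) := rfl

lemma nsq_conj (z : Fin n → ℂ) : nsq (fun j => (starRingEnd ℂ) (z j)) = nsq z := by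
  simp [nsq]

lemma wC_iota_re (a : Heis n) : (wC (iota a)).re = -a.2 := by
  simp [wC, iota, nsq_conj]

lemma wC_iota_im (a : Heis n) : (wC (iota a)).im = nsq a.1 := by
  simp [wC, iota, nsq_conj]

lemma normSq_wC_iota (a : Heis n) : Complex.normSq (wC (iota a)) = K4 a := by
  rw [Complex.normSq_apply, wC_iota_re, wC_iota_im]
  unfold K4; ring

lemma wC_iota_ne {a : Heis n} (h : a ≠ 0) : wC (iota a) ≠ 0 := by
  intro e
  have : Complex.normSq (wC (iota a)) = 0 := by rw [e]; simp
  rw [normSq_wC_iota] at this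
  exact (K4_pos h).ne' this

lemma Kmap_fst (ξ : Heis n) (lam β : ℝ) (a : Heis n) (j : Fin n) :
    (Kmap ξ lam β a).1 j =
      Complex.exp (Complex.I * ((theta ξ β j : ℝ) : ℂ)) *
        (((lam ^ 2 : ℝ) : ℂ) * ((starRingEnd ℂ) (a.1 j) / wC (iota a))) := by
  unfold Kmap rot dil crInv Mmat
  simp [Matrix.mulVec_diagonal]
  exact Or.inl rfl

lemma Kmap_snd (ξ : Heis n) (lam β : ℝ) (a : Heis n) :
    (Kmap ξ lam β a).2 = (lam ^ 2) ^ 2 * (a.2 / Complex.normSq (wC (iota a))) := by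
  unfold Kmap rot dil crInv iota
  simp

lemma normSq_expI (r : ℝ) : Complex.normSq (Complex.exp (Complex.I * (r : ℂ))) = 1 := by
  rw [Complex.normSq_eq_norm_sq, Complex.norm_exp]
  simp

lemma expI_mul_conj (r : ℝ) :
    Complex.exp (Complex.I * (r : ℂ)) * (starRingEnd ℂ) (Complex.exp (Complex.I * (r : ℂ))) = 1 := by
  rw [Complex.mul_conj, normSq_expI]
  simp

lemma nsq_Kmap (ξ : Heis n) (lam β : ℝ) (a : Heis n) :
    nsq (Kmap ξ lam β a).1 = lam ^ 4 * nsq a.1 / Complex.normSq (wC (iota a)) := by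
  unfold nsq
  have : ∀ j : Fin n, Complex.normSq ((Kmap ξ lam β a).1 j) =
      lam ^ 4 * Complex.normSq (a.1 j) / Complex.normSq (wC (iota a)) := by
    intro j
    rw [Kmap_fst, map_mul, map_mul, map_div₀, normSq_expI, Complex.normSq_conj,
      Complex.normSq_ofReal]
    ring
  rw [Finset.sum_congr rfl fun j _ => this j, ← Finset.sum_div, ← Finset.mul_sum]

lemma K4_Kmap (ξ : Heis n) (lam β : ℝ) {a : Heis n} (h : a ≠ 0) :
    K4 (Kmap ξ lam β a) = lam ^ 8 / K4 a := by
  have hK : K4 a ≠ 0 := (K4_pos h).ne'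
  have e1 : K4 (Kmap ξ lam β a) = (lam ^ 4 * nsq a.1 / K4 a) ^ 2 + ((lam ^2)^2 * (a.2 / K4 a)) ^ 2 := by
    unfold K4
    rw [nsq_Kmap, Kmap_snd, normSq_wC_iota]
    rfl
  rw [e1]
  field_simp
  unfold K4
  ring

lemma Kmap_Kmap (ξ : Heis n) (β : ℝ) {lam : ℝ} (hl : lam ≠ 0) {a : Heis n} (h : a ≠ 0) :
    Kmap ξ lam β (Kmap ξ lam β a) = a := by
  set b := Kmap ξ lam β a with hb
  set w := wC (iota a) with hwdef
  have hw : w ≠ 0 := wC_iota_ne h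
  have hns : Complex.normSq w ≠ 0 := by
    rw [normSq_wC_iota]; exact (K4_pos h).ne'
  have hwre : w.re = -a.2 := by rw [hwdef]; exact wC_iota_re a
  have hwim : w.im = nsq a.1 := by rw [hwdef]; exact wC_iota_im a
  have hb2 : b.2 = (lam ^ 2) ^ 2 * (a.2 / Complex.normSq w) := by
    rw [hb, Kmap_snd, ← hwdef]
  have hb1 : nsq b.1 = lam ^ 4 * nsq a.1 / Complex.normSq w := by
    rw [hb, nsq_Kmap, ← hwdef]
  have hwb : wC (iota b) = ((lam ^ 4 / Complex.normSq w : ℝ) : ℂ) * w := by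
    apply Complex.ext
    · rw [wC_iota_re, Complex.re_ofReal_mul, hwre, hb2]
      ring
    · rw [wC_iota_im, Complex.im_ofReal_mul, hwim, hb1]
      ring
  have hcast : ((lam ^ 4 / Complex.normSq w : ℝ) : ℂ) ≠ 0 :=
    Complex.ofReal_ne_zero.mpr (div_ne_zero (pow_ne_zero 4 hl) hns)
  have hwb_ne : wC (iota b) ≠ 0 := by rw [hwb]; exact mul_ne_zero hcast hw
  have hfst : ∀ j, (Kmap ξ lam β b).1 j = a.1 j := by
    intro j
    rw [Kmap_fst, hwb]
    have hbj : b.1 j = Complex.exp (Complex.I * ((theta ξ β j : ℝ) : ℂ)) *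
        (((lam ^ 2 : ℝ) : ℂ) * ((starRingEnd ℂ) (a.1 j) / w)) := by
      rw [hb, Kmap_fst, ← hwdef]
    rw [hbj]
    set E := Complex.exp (Complex.I * ((theta ξ β j : ℝ) : ℂ)) with hE
    have hEc : E * (starRingEnd ℂ) E = 1 := expI_mul_conj _
    have hcw : (starRingEnd ℂ) w * w = (Complex.normSq w : ℂ) := by
      rw [mul_comm, Complex.mul_conj]
    simp only [map_mul, map_div₀, Complex.conj_conj, Complex.conj_ofReal]
    push_cast
    have hlc : ((lam : ℂ)) ≠ 0 := by exact_mod_cast hl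
    have hcwne : (starRingEnd ℂ) w ≠ 0 := by
      simpa using hw
    have hnsC : ((Complex.normSq w : ℝ) : ℂ) ≠ 0 := by exact_mod_cast hns
    field_simp
    linear_combination ((Complex.normSq w : ℝ):ℂ) * a.1 j * hEc -
      a.1 j * hcw
  have hsnd : (Kmap ξ lam β b).2 = a.2 := by
    rw [Kmap_snd, hwb]
    have : Complex.normSq (((lam ^ 4 / Complex.normSq w : ℝ) : ℂ) * w) =
        (lam ^ 4 / Complex.normSq w) ^ 2 * Complex.normSq w := by
      rw [map_mul, Complex.normSq_ofReal]; ring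
    rw [this, hb, Kmap_snd, ← hwdef]
    have hl4 : lam ^ 4 ≠ 0 := pow_ne_zero 4 hl
    field_simp
  exact Prod.ext (funext hfst) hsnd

lemma Phi_Phi (ξ : Heis n) (β : ℝ) {lam : ℝ} (hl : lam ≠ 0) {ζ : Heis n}
    (h : hmul (hinv ξ) ζ ≠ 0) : Phi ξ lam β (Phi ξ lam β ζ) = ζ := by
  rw [Phi_eq, Phi_eq]
  unfold tau
  rw [hinv_cancel_left, Kmap_Kmap ξ β hl h, hmul_cancel_left]

lemma dH_pow4 (ξ ζ : Heis n) : dH ξ ζ ^ (4 : ℕ) = K4 (hmul (hinv ζ) ξ) := korNorm_pow4 _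

lemma dH_Phi_pow4 (β : ℝ) {ξ ζ : Heis n} {lam : ℝ} (hl : lam ≠ 0)
    (h : hmul (hinv ξ) ζ ≠ 0) :
    dH ξ (Phi ξ lam β ζ) ^ (4 : ℕ) = lam ^ 8 / K4 (hmul (hinv ξ) ζ) := by
  have e1 : hmul (hinv (Phi ξ lam β ζ)) ξ = hinv (Kmap ξ lam β (hmul (hinv ξ) ζ)) := by
    rw [Phi_eq]
    unfold tau
    rw [hinv_hmul, hmul_assoc, hinv_hmul_cancel, hmul_zero_right]
  unfold dH
  rw [e1, korNorm_hinv, korNorm_pow4, K4_Kmap _ _ _ h]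

lemma dH_zero_left (ζ : Heis n) : dH 0 ζ = korNorm ζ := by
  unfold dH
  rw [hmul_zero_right, korNorm_hinv]

lemma dH_self (ξ : Heis n) : dH ξ ξ = 0 := by
  unfold dH
  rw [hinv_hmul_cancel, korNorm_zero]

end HeisPf
namespace HeisPf
open Heis

variable {n : ℕ}

lemma dH_eq (ξ ζ : Heis n) : dH ξ ζ = K4 (hmul (hinv ζ) ξ) ^ ((1:ℝ)/4) := rfl

lemma dH_nonneg (ξ ζ : Heis n) : 0 ≤ dH ξ ζ := korNorm_nonneg _

lemma dH_pos {ξ ζ : Heis n} (h : ζ ≠ ξ) : 0 < dH ξ ζ := by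
  apply korNorm_pos
  intro e
  apply h
  have : hmul ζ (hmul (hinv ζ) ξ) = hmul ζ 0 := by rw [e]
  rw [hmul_cancel_left, hmul_zero_right] at this
  exact this.symm

lemma tendsto_zero_of_K4 {g : ℕ → Heis n}
    (h : Tendsto (fun m => K4 (g m)) atTop (nhds 0)) :
    Tendsto g atTop (nhds (0 : Heis n)) := by
  have habs : ∀ (u : ℕ → ℝ), (∀ m, u m ^ 2 ≤ K4 (g m)) → Tendsto (fun m => |u m|) atTop (nhds 0) := by
    intro u hu
    have h1 : Tendsto (fun m => u m ^ 2) atTop (nhds 0) :=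
      squeeze_zero (fun m => sq_nonneg _) hu h
    have h2 : Tendsto (fun m => Real.sqrt (u m ^ 2)) atTop (nhds 0) := by
      have := (Real.continuous_sqrt.tendsto 0).comp h1
      simpa [Function.comp_def] using this
    simpa [Real.sqrt_sq_eq_abs] using h2
  have hnsq : Tendsto (fun m => nsq (g m).1) atTop (nhds 0) := by
    have := habs (fun m => nsq (g m).1) (fun m => le_add_of_nonneg_right (sq_nonneg _))
    simpa [_root_.abs_of_nonneg (nsq_nonneg _)] using this
  have hsnd : Tendsto (fun m => (g m).2) atTop (nhds 0) := by
    have := habs (fun m => (g m).2) (fun m => le_add_of_nonneg_left (sq_nonneg _))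
    exact (tendsto_zero_iff_abs_tendsto_zero _).2 this
  have hfst : Tendsto (fun m => (g m).1) atTop (nhds (0 : Fin n → ℂ)) := by
    rw [tendsto_pi_nhds]
    intro j
    have hns : Tendsto (fun m => Complex.normSq ((g m).1 j)) atTop (nhds 0) := by
      apply squeeze_zero (fun m => Complex.normSq_nonneg _) (fun m => ?_) hnsq
      exact Finset.single_le_sum (fun i _ => Complex.normSq_nonneg ((g m).1 i))
        (Finset.mem_univ j)
    have habs2 : Tendsto (fun m => ‖(g m).1 j‖) atTop (nhds 0) := by
      have := (Real.continuous_sqrt.tendsto 0).comp hns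
      simpa [Complex.norm_def, Function.comp_def] using this
    rw [Pi.zero_apply, tendsto_zero_iff_norm_tendsto_zero]
    simpa using habs2
  rw [show (0 : Heis n) = ((0 : Fin n → ℂ), (0 : ℝ)) from rfl, nhds_prod_eq]
  exact hfst.prodMk hsnd

lemma continuous_tau (ξ : Heis n) : Continuous (tau ξ) := by
  unfold tau hmul
  have h1 : Continuous fun x : Heis n => hermInner ξ.1 x.1 := by
    unfold hermInner
    apply continuous_finset_sum
    intro j _
    simp only [starRingEnd_apply]
    exact continuous_const.mul ((continuous_apply j).comp continuous_fst).star
  exact (continuous_const.add continuous_fst).prodMk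
    ((continuous_const.add continuous_snd).add
      (continuous_const.mul (Complex.continuous_im.comp h1)))

/-- Step A : the scaling parameter is pinned down by the asymptotics. -/
lemma stepA {f : Heis n → ℝ} (hcont : Continuous f) {ν α : ℝ} (hν : 0 < ν) (hα : 0 < α)
    (hlim : Tendsto (fun ζ => korNorm ζ ^ ν * f ζ) (atInftyH n) (nhds α))
    (β : ℝ) (ξ : Heis n) {lam : ℝ} (hlam : 0 < lam)
    (hs : ∀ ζ : Heis n, ζ ≠ ξ → (lam / dH ξ ζ) ^ ν * f (Phi ξ lam β ζ) = f ζ) :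
    lam ^ ν * f ξ = α := by
  set ζs : ℕ → Heis n := fun m => ((0 : Fin n → ℂ), (m : ℝ)) with hζs
  have hK4 : ∀ m, K4 (ζs m) = (m : ℝ) ^ 2 := by
    intro m; simp [hζs, K4, nsq]
  have hcast : Tendsto (fun m : ℕ => (m : ℝ)) atTop atTop := tendsto_natCast_atTop_atTop
  have hKtop : Tendsto (fun m => K4 (ζs m)) atTop atTop := by
    simp only [hK4]
    exact (tendsto_pow_atTop two_ne_zero).comp hcast
  have hkor : Tendsto (fun m => korNorm (ζs m)) atTop atTop := by
    simp only [korNorm_eq]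
    exact (tendsto_rpow_atTop (by norm_num : (0:ℝ) < 1/4)).comp hKtop
  have hto : Tendsto ζs atTop (atInftyH n) := by
    unfold atInftyH
    rw [Filter.tendsto_comap_iff]
    exact hkor
  have hLHS : Tendsto (fun m => korNorm (ζs m) ^ ν * f (ζs m)) atTop (nhds α) :=
    hlim.comp hto
  have hev : ∀ᶠ m : ℕ in atTop, |ξ.2| < (m : ℝ) := hcast.eventually_gt_atTop _
  have hne : ∀ᶠ m : ℕ in atTop, ζs m ≠ ξ := by
    filter_upwards [hev] with m hm
    intro e
    rw [← e] at hm
    simp only [hζs] at hm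
    exact absurd (le_abs_self _) (not_le.mpr hm)
  have hinner : ∀ m, hmul (hinv ξ) (ζs m) = (-ξ.1, (m : ℝ) - ξ.2) := by
    intro m
    simp only [hζs, hmul, hinv]
    refine Prod.ext (by simp) ?_
    simp [hermInner_zero_right]
    ring
  have hinne : ∀ᶠ m : ℕ in atTop, hmul (hinv ξ) (ζs m) ≠ 0 := by
    filter_upwards [hev] with m hm e
    have h2 : ((m:ℝ) - ξ.2) = 0 := by
      have := congrArg Prod.snd e
      rw [hinner m] at this
      simpa using this
    have h1 : (m : ℝ) ≤ |ξ.2| := by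
      have : (m:ℝ) = ξ.2 := by linarith
      rw [this]; exact le_abs_self _
    linarith
  have hdenom : Tendsto (fun m : ℕ => nsq ξ.1 ^ 2 + ((m:ℝ) - ξ.2) ^ 2) atTop atTop := by
    apply tendsto_atTop_add_const_left
    have h8 : Tendsto (fun m : ℕ => (m:ℝ) + (-ξ.2)) atTop atTop :=
      tendsto_atTop_add_const_right _ _ hcast
    exact (tendsto_pow_atTop two_ne_zero).comp (h8.congr fun m => by ring)
  have hPhi : Tendsto (fun m => f (Phi ξ lam β (ζs m))) atTop (nhds (f ξ)) := by
    have hKm : Tendsto (fun m => K4 (Kmap ξ lam β (hmul (hinv ξ) (ζs m)))) atTop (nhds 0) := by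
      have h0 : Tendsto (fun m : ℕ => lam ^ 8 / (nsq ξ.1 ^ 2 + ((m:ℝ) - ξ.2) ^ 2)) atTop (nhds 0) :=
        Filter.Tendsto.div_atTop tendsto_const_nhds hdenom
      apply h0.congr'
      filter_upwards [hinne] with m hm
      rw [K4_Kmap _ _ _ hm, hinner]
      simp [K4, nsq]
    have hKmap0 : Tendsto (fun m => Kmap ξ lam β (hmul (hinv ξ) (ζs m))) atTop
        (nhds (0 : Heis n)) := tendsto_zero_of_K4 hKm
    have hc : Tendsto (fun m => f (tau ξ (Kmap ξ lam β (hmul (hinv ξ) (ζs m))))) atTop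
        (nhds (f (tau ξ 0))) :=
      ((hcont.comp (continuous_tau ξ)).tendsto 0).comp hKmap0
    have htau0 : tau ξ (0 : Heis n) = ξ := hmul_zero_right ξ
    rw [htau0] at hc
    exact hc.congr fun m => by rw [Phi_eq]
  have hX : ∀ m, K4 (hmul (hinv (ζs m)) ξ) = nsq ξ.1 ^ 2 + ((m:ℝ) - ξ.2) ^ 2 := by
    intro m
    have he : hmul (hinv (ζs m)) ξ = (ξ.1, ξ.2 - (m:ℝ)) := by
      simp only [hζs, hmul, hinv]
      refine Prod.ext (by funext j; simp) ?_
      simp [hermInner]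
      ring
    rw [he]
    simp only [K4]
    ring_nf
  have hratio : Tendsto (fun m => (korNorm (ζs m) / dH ξ (ζs m)) ^ ν) atTop (nhds 1) := by
    have hub : Tendsto (fun m : ℕ => (nsq ξ.1 ^ 2 + ((m:ℝ) - ξ.2) ^ 2) / (m:ℝ) ^ 2) atTop
        (nhds 1) := by
      have h1 : Tendsto (fun m : ℕ => nsq ξ.1 ^ 2 / (m:ℝ) ^ 2) atTop (nhds 0) :=
        Filter.Tendsto.div_atTop tendsto_const_nhds ((tendsto_pow_atTop two_ne_zero).comp hcast)
      have h3 : Tendsto (fun m : ℕ => 1 - ξ.2 / (m:ℝ)) atTop (nhds 1) := by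
        have h4 : Tendsto (fun m : ℕ => ξ.2 / (m:ℝ)) atTop (nhds 0) :=
          Filter.Tendsto.div_atTop tendsto_const_nhds hcast
        have h5 := (tendsto_const_nhds (x := (1:ℝ)) (f := atTop (α := ℕ))).sub h4
        simpa using h5
      have h2 : Tendsto (fun m : ℕ => (1 - ξ.2 / (m:ℝ)) ^ 2) atTop (nhds 1) := by
        have := h3.pow 2
        simpa using this
      have hsum := h1.add h2
      rw [zero_add] at hsum
      apply hsum.congr'
      filter_upwards [Filter.eventually_gt_atTop 0] with m hm
      have hm0 : (m : ℝ) ≠ 0 := Nat.cast_ne_zero.mpr hm.ne'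
      field_simp
      try ring
    have hinv1 : Tendsto (fun m : ℕ => (m:ℝ) ^ 2 / (nsq ξ.1 ^ 2 + ((m:ℝ) - ξ.2) ^ 2)) atTop
        (nhds 1) := by
      have h6 := hub.inv₀ one_ne_zero
      rw [inv_one] at h6
      apply h6.congr
      intro m
      rw [inv_div]
    have hr4 : Tendsto (fun m : ℕ => ((m:ℝ) ^ 2 / (nsq ξ.1 ^ 2 + ((m:ℝ) - ξ.2) ^ 2)) ^ ((1:ℝ)/4 * ν))
        atTop (nhds 1) := by
      have h7 := hinv1.rpow_const (p := (1:ℝ)/4 * ν) (Or.inl one_ne_zero)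
      rwa [Real.one_rpow] at h7
    apply hr4.congr
    intro m
    have hXpos : (0:ℝ) ≤ nsq ξ.1 ^ 2 + ((m:ℝ) - ξ.2) ^ 2 := by positivity
    have e1 : korNorm (ζs m) = ((m:ℝ)^2) ^ ((1:ℝ)/4) := by rw [korNorm_eq, hK4]
    have e2 : dH ξ (ζs m) = (nsq ξ.1 ^ 2 + ((m:ℝ) - ξ.2) ^ 2) ^ ((1:ℝ)/4) := by
      rw [dH_eq, hX]
    rw [e1, e2, ← Real.div_rpow (sq_nonneg _) hXpos, ← Real.rpow_mul (by positivity)]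
  have hmain : Tendsto (fun m => (korNorm (ζs m) / dH ξ (ζs m)) ^ ν *
      (lam ^ ν * f (Phi ξ lam β (ζs m)))) atTop (nhds (1 * (lam ^ ν * f ξ))) :=
    hratio.mul (tendsto_const_nhds.mul hPhi)
  rw [one_mul] at hmain
  have heq : ∀ᶠ m in atTop, (korNorm (ζs m) / dH ξ (ζs m)) ^ ν *
      (lam ^ ν * f (Phi ξ lam β (ζs m))) = korNorm (ζs m) ^ ν * f (ζs m) := by
    filter_upwards [hne] with m hm
    rw [← hs (ζs m) hm]
    have hd : 0 < dH ξ (ζs m) := dH_pos hm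
    have hk : 0 ≤ korNorm (ζs m) := korNorm_nonneg _
    have hq : (korNorm (ζs m) / dH ξ (ζs m)) ^ ν * lam ^ ν =
        korNorm (ζs m) ^ ν * (lam / dH ξ (ζs m)) ^ ν := by
      rw [← Real.mul_rpow (by positivity) hlam.le, ← Real.mul_rpow hk (by positivity)]
      congr 1
      field_simp
      try ring
    calc (korNorm (ζs m) / dH ξ (ζs m)) ^ ν * (lam ^ ν * f (Phi ξ lam β (ζs m)))
        = ((korNorm (ζs m) / dH ξ (ζs m)) ^ ν * lam ^ ν) * f (Phi ξ lam β (ζs m)) := by ring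
      _ = (korNorm (ζs m) ^ ν * (lam / dH ξ (ζs m)) ^ ν) * f (Phi ξ lam β (ζs m)) := by rw [hq]
      _ = korNorm (ζs m) ^ ν * ((lam / dH ξ (ζs m)) ^ ν * f (Phi ξ lam β (ζs m))) := by ring
  exact tendsto_nhds_unique (hmain.congr' heq) hLHS

end HeisPf
namespace HeisPf
open Heis

variable {n : ℕ}

/-- Y-parameter of the line direction. -/
def Yv (zz : Fin n → ℂ) (k : Fin n) (v : ℂ) : ℝ := (zz k * (starRingEnd ℂ) v).im

/-- rotation coefficient. -/
def cc (zz : Fin n → ℂ) (k : Fin n) (v : ℂ) (lam β : ℝ) : ℂ :=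
  ((lam ^ 2 : ℝ) : ℂ) * Complex.exp (Complex.I * ((theta ((zz, (0:ℝ)) : Heis n) β k : ℝ) : ℂ)) *
    (starRingEnd ℂ) v

/-- the key complex coefficient P. -/
def Pc (zz : Fin n → ℂ) (k : Fin n) (v : ℂ) (lam β : ℝ) : ℂ :=
  zz k * (starRingEnd ℂ) (cc zz k v lam β)

def AAf (zz : Fin n → ℂ) (k : Fin n) (v : ℂ) (lam β : ℝ) (s : ℝ) : ℝ :=
  nsq zz * (4 * Yv zz k v ^ 2 + s ^ 2) + 4 * Yv zz k v * (Pc zz k v lam β).re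
    - 2 * s * (Pc zz k v lam β).im + lam ^ 4

def BBf (zz : Fin n → ℂ) (k : Fin n) (v : ℂ) (lam β : ℝ) (s : ℝ) : ℝ :=
  -2 * lam ^ 4 * Yv zz k v + 4 * Yv zz k v * (Pc zz k v lam β).im * s
    + 2 * (Pc zz k v lam β).re * s ^ 2

lemma update_eq_add_single (zz : Fin n → ℂ) (k : Fin n) (a : ℂ) :
    Function.update zz k (zz k + a) = zz + Pi.single k a := by
  funext j
  by_cases h : j = k
  · subst h; simp
  · simp [Function.update_of_ne h, Pi.single_eq_of_ne h]

lemma nsq_single (k : Fin n) (a : ℂ) : nsq (Pi.single k a) = Complex.normSq a := by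
  unfold nsq
  rw [Finset.sum_eq_single k]
  · simp
  · intro j _ hj; simp [Pi.single_eq_of_ne hj]
  · intro h; exact absurd (Finset.mem_univ k) h

lemma nsq_add_single (zz : Fin n → ℂ) (k : Fin n) (a : ℂ) :
    nsq (zz + (Pi.single k a : Fin n → ℂ)) =
      nsq zz + 2 * (zz k * (starRingEnd ℂ) a).re + Complex.normSq a := by
  unfold nsq
  have h : ∀ j, Complex.normSq ((zz + (Pi.single k a : Fin n → ℂ)) j) =
      Complex.normSq (zz j) +
        (if j = k then 2 * (zz k * (starRingEnd ℂ) a).re + Complex.normSq a else 0) := by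
    intro j
    by_cases h : j = k
    · subst h
      simp only [Pi.add_apply, Pi.single_eq_same, if_true, eq_self_iff_true]
      rw [Complex.normSq_add]
      ring
    · simp [Pi.single_eq_of_ne h, h]
  rw [Finset.sum_congr rfl fun j _ => h j, Finset.sum_add_distrib,
    Finset.sum_ite_eq' Finset.univ k]
  simp [add_assoc]

lemma eta_eq (zz : Fin n → ℂ) (k : Fin n) (v : ℂ) (s : ℝ) :
    hmul (hinv ((zz, (0:ℝ)) : Heis n)) (Function.update zz k (zz k + (s:ℂ)*v), (0:ℝ)) =
      (Pi.single k ((s:ℂ)*v), -2*s*(Yv zz k v)) := by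
  unfold hmul hinv
  refine Prod.ext ?_ ?_
  · show -zz + Function.update zz k (zz k + (s:ℂ)*v) = Pi.single k ((s:ℂ)*v)
    rw [update_eq_add_single]
    funext j
    simp
  · show -(0:ℝ) + 0 + 2 * (hermInner (-zz) (Function.update zz k (zz k + (s:ℂ)*v))).im
        = -2*s*(Yv zz k v)
    have h1 : (starRingEnd ℂ) ((s:ℂ)*v) = (s:ℂ) * (starRingEnd ℂ) v := by
      rw [map_mul, Complex.conj_ofReal]
    have hH : hermInner (-zz) (zz + (Pi.single k ((s:ℂ)*v) : Fin n → ℂ)) =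
        hermInner (-zz) zz + ((-s : ℝ):ℂ) * (zz k * (starRingEnd ℂ) v) := by
      rw [hermInner_add_right, hermInner_single_right, h1]
      simp only [Pi.neg_apply]
      push_cast
      ring
    rw [update_eq_add_single, hH]
    have h6 : (hermInner (-zz) zz).im = 0 := by
      rw [hermInner_neg_left]; simp [hermInner_self_im]
    simp only [Complex.add_im, h6, Complex.im_ofReal_mul, zero_add]
    unfold Yv; ring

lemma K4_eta (zz : Fin n → ℂ) (k : Fin n) {v : ℂ} (hv : Complex.normSq v = 1) (s : ℝ) :
    K4 ((Pi.single k ((s:ℂ)*v), -2*s*(Yv zz k v)) : Heis n) =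
      s^2 * (s^2 + 4 * (Yv zz k v)^2) := by
  unfold K4
  rw [nsq_single, map_mul, hv, Complex.normSq_ofReal]
  ring

lemma eta_ne (zz : Fin n → ℂ) (k : Fin n) {v : ℂ} (hv : Complex.normSq v = 1)
    {s : ℝ} (hs : s ≠ 0) :
    ((Pi.single k ((s:ℂ)*v), -2*s*(Yv zz k v)) : Heis n) ≠ 0 := by
  intro e
  rw [Prod.ext_iff] at e
  have h0 : (Pi.single k ((s:ℂ)*v) : Fin n → ℂ) = 0 := e.1
  have h1 : ((s:ℂ)*v) = 0 := by
    have := congrFun h0 k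
    rwa [Pi.single_eq_same] at this
  have hv0 : v ≠ 0 := by
    intro hv0; rw [hv0] at hv; simp at hv
  exact (mul_ne_zero (Complex.ofReal_ne_zero.mpr hs) hv0) h1

lemma exp_pi_div_two : Complex.exp (Complex.I * ((Real.pi/2 : ℝ) : ℂ)) = Complex.I := by
  rw [mul_comm, Complex.exp_mul_I, ← Complex.ofReal_cos, ← Complex.ofReal_sin,
    Real.cos_pi_div_two, Real.sin_pi_div_two]
  simp

lemma conj_expI (r : ℝ) :
    (starRingEnd ℂ) (Complex.exp (Complex.I * (r : ℂ))) =
      Complex.exp (-(Complex.I * (r : ℂ))) := by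
  rw [← Complex.exp_conj, map_mul, Complex.conj_I, Complex.conj_ofReal]
  ring_nf

lemma self_mul_exp_neg_two_arg (z : ℂ) :
    z * Complex.exp (-(Complex.I * ((2 * z.arg : ℝ) : ℂ))) = (starRingEnd ℂ) z := by
  by_cases hz : z = 0
  · simp [hz]
  · have h := Complex.norm_mul_exp_arg_mul_I z
    calc z * Complex.exp (-(Complex.I * ((2 * z.arg : ℝ) : ℂ)))
        = ((‖z‖ : ℝ) : ℂ) * Complex.exp (z.arg * Complex.I) *
            Complex.exp (-(Complex.I * ((2 * z.arg : ℝ) : ℂ))) := by rw [h]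
      _ = ((‖z‖ : ℝ) : ℂ) *
            Complex.exp (z.arg * Complex.I + -(Complex.I * ((2 * z.arg : ℝ) : ℂ))) := by
          rw [Complex.exp_add]; ring
      _ = ((‖z‖ : ℝ) : ℂ) * Complex.exp (-(z.arg * Complex.I)) := by
          congr 1; push_cast; ring_nf
      _ = (starRingEnd ℂ) (((‖z‖ : ℝ) : ℂ) * Complex.exp (z.arg * Complex.I)) := by
          rw [map_mul, Complex.conj_ofReal]
          congr 1
          rw [← Complex.exp_conj, map_mul, Complex.conj_I, Complex.conj_ofReal]
          ring_nf
      _ = (starRingEnd ℂ) z := by rw [h]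

/-- The design identity for the rotation angles. -/
lemma Pc_im (zz : Fin n → ℂ) (k : Fin n) (v : ℂ) (lam : ℝ) {β : ℝ} (hβ : 0 < β) :
    (Pc zz k v lam β).im = -lam^2 * ((starRingEnd ℂ) (zz k) * v).re := by
  unfold Pc cc
  by_cases hz : zz k = 0
  · simp [hz]
  · have hpos : 0 < nsq zz + β := by
      have := nsq_nonneg zz; linarith
    have hwc : wC ((zz, (0:ℝ)) : Heis n) + Complex.I * (β : ℂ) =
        ((nsq zz + β : ℝ) : ℂ) * Complex.I := by
      unfold wC
      push_cast
      ring
    have harg : (wC ((zz, (0:ℝ)) : Heis n) + Complex.I * (β : ℂ)).arg = Real.pi/2 := by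
      rw [hwc, Complex.arg_real_mul _ hpos, Complex.arg_I]
    have hθ : theta ((zz, (0:ℝ)) : Heis n) β k = 2 * (zz k).arg + Real.pi/2 := by
      unfold theta
      rw [if_pos, harg]
      exact hz
    rw [hθ]
    have hsplit : Complex.exp (Complex.I * ((2 * (zz k).arg + Real.pi/2 : ℝ) : ℂ)) =
        Complex.exp (Complex.I * ((2 * (zz k).arg : ℝ) : ℂ)) * Complex.I := by
      have he : (Complex.I * ((2 * (zz k).arg + Real.pi/2 : ℝ) : ℂ)) =
          Complex.I * ((2 * (zz k).arg : ℝ) : ℂ) + Complex.I * ((Real.pi/2 : ℝ) : ℂ) := by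
        push_cast; ring
      rw [he, Complex.exp_add, exp_pi_div_two]
    rw [map_mul, map_mul, hsplit, map_mul, Complex.conj_ofReal, Complex.conj_conj,
      Complex.conj_I, conj_expI]
    have hkey : zz k * (((lam^2:ℝ):ℂ) * (Complex.exp (-(Complex.I * ((2 * (zz k).arg : ℝ) : ℂ))) * -Complex.I) * v)
        = ((lam^2:ℝ):ℂ) * (-Complex.I) * ((starRingEnd ℂ) (zz k) * v) := by
      have h3 := self_mul_exp_neg_two_arg (zz k)
      calc zz k * (((lam^2:ℝ):ℂ) * (Complex.exp (-(Complex.I * ((2 * (zz k).arg : ℝ) : ℂ))) * -Complex.I) * v)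
          = ((lam^2:ℝ):ℂ) * (-Complex.I) * ((zz k * Complex.exp (-(Complex.I * ((2 * (zz k).arg : ℝ) : ℂ)))) * v) := by ring
        _ = ((lam^2:ℝ):ℂ) * (-Complex.I) * ((starRingEnd ℂ) (zz k) * v) := by rw [h3]
    rw [hkey]
    have : (((lam^2:ℝ):ℂ) * (-Complex.I) * ((starRingEnd ℂ) (zz k) * v)) =
        ((lam^2:ℝ):ℂ) * (-(Complex.I * ((starRingEnd ℂ) (zz k) * v))) := by ring
    rw [this, Complex.im_ofReal_mul]
    simp [Complex.mul_im]
    ring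

end HeisPf
namespace HeisPf
open Heis

variable {n : ℕ}

lemma K4_Phi_line (zz : Fin n → ℂ) (k : Fin n) {v : ℂ} (hv : Complex.normSq v = 1)
    {lam : ℝ} (hlam : lam ≠ 0) (β : ℝ) {s : ℝ} (hs : s ≠ 0) :
    K4 (Phi ((zz,(0:ℝ)) : Heis n) lam β (Function.update zz k (zz k + (s:ℂ)*v), (0:ℝ))) =
      (s^2 * (AAf zz k v lam β s)^2 + (BBf zz k v lam β s)^2) /
        (s^2 * (4*(Yv zz k v)^2 + s^2)^2) := by
  set Y := Yv zz k v with hY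
  set P := Pc zz k v lam β with hP
  set pr := P.re
  set pi := P.im
  have h4Ys : (0:ℝ) < s^2*(4*Y^2+s^2) := by positivity
  rw [Phi_eq, eta_eq]
  set η : Heis n := (Pi.single k ((s:ℂ)*v), -2*s*Y) with hη
  set E := Complex.exp (Complex.I * ((theta ((zz,(0:ℝ)) : Heis n) β k : ℝ) : ℂ)) with hE
  set c : ℂ := ((lam^2:ℝ):ℂ) * E * (starRingEnd ℂ) v with hc
  set w := wC (iota η) with hw
  -- w facts
  have hwre : w.re = 2*s*Y := by
    rw [hw, wC_iota_re]; show -(-2*s*Y) = 2*s*Y; ring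
  have hwim : w.im = s^2 := by
    rw [hw, wC_iota_im]
    show nsq (Pi.single k ((s:ℂ)*v)) = s^2
    rw [nsq_single, map_mul, hv, Complex.normSq_ofReal]; ring
  have hns : Complex.normSq w = s^2*(4*Y^2+s^2) := by
    rw [Complex.normSq_apply, hwre, hwim]; ring
  have hwne : w ≠ 0 := by
    intro e
    have h0 : Complex.normSq w = 0 := by rw [e]; simp
    rw [hns] at h0
    exact h4Ys.ne' h0
  set w2 : ℂ := ((2*Y:ℝ):ℂ) + Complex.I*((s:ℝ):ℂ) with hw2def
  have hw2re : w2.re = 2*Y := by simp [hw2def]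
  have hw2im : w2.im = s := by simp [hw2def]
  have hw2 : w = ((s:ℝ):ℂ) * w2 := by
    apply Complex.ext
    · rw [hwre, Complex.re_ofReal_mul, hw2re]; ring
    · rw [hwim, Complex.im_ofReal_mul, hw2im]; ring
  -- components of the Kmap image
  have hb1 : (Kmap ((zz,(0:ℝ)) : Heis n) lam β η).1 = Pi.single k (c*(s:ℂ)/w) := by
    funext j
    rw [Kmap_fst, ← hw]
    by_cases hj : j = k
    · subst hj
      have : η.1 j = (s:ℂ)*v := by rw [hη]; exact Pi.single_eq_same _ _
      rw [this, Pi.single_eq_same, map_mul, Complex.conj_ofReal, hc]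
      field_simp
      try ring
    · have : η.1 j = 0 := by rw [hη]; exact Pi.single_eq_of_ne hj _
      rw [this, Pi.single_eq_of_ne hj]
      try simp
  have hb2 : (Kmap ((zz,(0:ℝ)) : Heis n) lam β η).2 = (lam^2)^2*(-2*s*Y/(s^2*(4*Y^2+s^2))) := by
    rw [Kmap_snd, ← hw, hns]
    try rfl
  -- the key complex number
  have hcwne : (starRingEnd ℂ) w ≠ 0 := by simpa using hwne
  have hcw : (starRingEnd ℂ) w * w = ((s^2*(4*Y^2+s^2) : ℝ):ℂ) := by
    rw [mul_comm, Complex.mul_conj, hns]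
  have hu : zz k * (starRingEnd ℂ) (c*(s:ℂ)/w) =
      ((s^2 : ℝ):ℂ) * (P * w2) / ((s^2*(4*Y^2+s^2) : ℝ):ℂ) := by
    rw [map_div₀, map_mul, Complex.conj_ofReal, ← mul_div_assoc]
    rw [div_eq_div_iff hcwne (by
      exact_mod_cast h4Ys.ne' : ((s^2*(4*Y^2+s^2) : ℝ):ℂ) ≠ 0)]
    have hPdef : P = zz k * (starRingEnd ℂ) c := by rw [hP]; rfl
    rw [hPdef, ← hcw, hw2]
    simp only [map_mul, Complex.conj_ofReal, Complex.conj_conj]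
    push_cast
    ring
  have hPw2re : (P * w2).re = pr*(2*Y) - pi*s := by
    rw [Complex.mul_re, hw2re, hw2im]
  have hPw2im : (P * w2).im = pr*s + pi*(2*Y) := by
    rw [Complex.mul_im, hw2re, hw2im]; try ring
  have hure : (zz k * (starRingEnd ℂ) (c*(s:ℂ)/w)).re =
      s^2*(2*Y*pr - s*pi)/(s^2*(4*Y^2+s^2)) := by
    rw [hu, Complex.div_ofReal_re, Complex.re_ofReal_mul, hPw2re]
    try ring_nf
  have huim : (zz k * (starRingEnd ℂ) (c*(s:ℂ)/w)).im =
      s^2*(s*pr + 2*Y*pi)/(s^2*(4*Y^2+s^2)) := by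
    rw [hu, Complex.div_ofReal_im, Complex.im_ofReal_mul, hPw2im]
    try ring_nf
  have hnsc : Complex.normSq c = lam^4 := by
    rw [hc, map_mul, map_mul, normSq_expI, Complex.normSq_conj, hv, Complex.normSq_ofReal]
    ring
  have hnscsw : Complex.normSq (c*(s:ℂ)/w) = lam^4*s^2/(s^2*(4*Y^2+s^2)) := by
    rw [map_div₀, map_mul, hnsc, hns, Complex.normSq_ofReal]
    ring_nf
  -- assemble
  show K4 (hmul ((zz,(0:ℝ)) : Heis n) (Kmap ((zz,(0:ℝ)) : Heis n) lam β η)) = _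
  unfold K4 hmul
  have hfst : (((zz,(0:ℝ)) : Heis n).1 + (Kmap ((zz,(0:ℝ)) : Heis n) lam β η).1) =
      zz + (Pi.single k (c*(s:ℂ)/w) : Fin n → ℂ) := by rw [hb1]
  rw [hfst, nsq_add_single, hure, hnscsw]
  have hsnd : (((zz,(0:ℝ)) : Heis n).2 + (Kmap ((zz,(0:ℝ)) : Heis n) lam β η).2 +
      2 * (hermInner ((zz,(0:ℝ)) : Heis n).1 (Kmap ((zz,(0:ℝ)) : Heis n) lam β η).1).im) =
      (lam^2)^2*(-2*s*Y/(s^2*(4*Y^2+s^2))) + 2*(s^2*(s*pr + 2*Y*pi)/(s^2*(4*Y^2+s^2))) := by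
    rw [hb2, hb1]
    show (0:ℝ) + _ + _ = _
    rw [hermInner_single_right, huim]
    ring
  rw [hsnd]
  unfold AAf BBf
  rw [← hY, ← hP]
  have h1 : (4*Y^2+s^2) ≠ 0 := by positivity
  field_simp
  ring
end HeisPf
namespace HeisPf
open Heis

variable {n : ℕ}

lemma hasDerivAt_quad (a b c : ℝ) : HasDerivAt (fun s : ℝ => a*s^2 + b*s + c) b 0 := by
  have h1 : HasDerivAt (fun s : ℝ => a*s^2) (a*(2*0^1)) 0 := (hasDerivAt_pow 2 0).const_mul a
  have h2 : HasDerivAt (fun s : ℝ => b*s) (b*1) 0 := (hasDerivAt_id 0).const_mul b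
  have h3 := (h1.add h2).add_const c
  simpa using h3

/-- the final constant identity -/
lemma const_identity {ν α lam fξ : ℝ} (X : ℝ) (hν : 0 < ν) (hα : 0 < α) (hlam : 0 < lam)
    (hfξ : 0 < fξ) (hA : lam ^ ν * fξ = α) :
    fξ * (ν/4 * (4*(-lam^2*X)/lam^4)) = -ν * α ^ (-(2/ν)) * X * fξ ^ (1 + 2/ν) := by
  have hlν : lam ^ ν = α / fξ := by
    field_simp at hA ⊢
    linarith [hA]
  have hl2 : (lam:ℝ)^(2:ℕ) = α^(2/ν) * fξ^(-(2/ν)) := by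
    have e1 : ((lam:ℝ)^(2:ℕ) : ℝ) = lam ^ ((2:ℕ):ℝ) := (Real.rpow_natCast lam 2).symm
    have e2 : lam ^ ((2:ℕ):ℝ) = lam ^ (ν * (2/ν)) := by
      congr 1
      field_simp
      norm_num
    have e3 : lam ^ (ν * (2/ν)) = (lam ^ ν) ^ (2/ν) := Real.rpow_mul hlam.le _ _
    rw [e1, e2, e3, hlν, Real.div_rpow hα.le hfξ.le, Real.rpow_neg hfξ.le]
    field_simp
  have hfν : fξ ^ (1 + 2/ν) = fξ * fξ ^ (2/ν) := by
    rw [Real.rpow_add hfξ, Real.rpow_one]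
  have hαν : α ^ (-(2/ν)) = (α ^ (2/ν))⁻¹ := by
    rw [Real.rpow_neg hα.le]
  have hfν' : fξ ^ (-(2/ν)) = (fξ ^ (2/ν))⁻¹ := by
    rw [Real.rpow_neg hfξ.le]
  have hαpos : 0 < α ^ (2/ν) := Real.rpow_pos_of_pos hα _
  have hfpos : 0 < fξ ^ (2/ν) := Real.rpow_pos_of_pos hfξ _
  rw [hfν, hαν]
  rw [hfν'] at hl2
  have hlam4 : lam^(4:ℕ) = (lam^(2:ℕ))*(lam^(2:ℕ)) := by ring
  rw [hlam4, hl2]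
  field_simp
end HeisPf
namespace HeisPf
open Heis

variable {n : ℕ}

lemma rpow_four {x : ℝ} (hx : 0 < x) (ν : ℝ) : (x^(4:ℕ))^(ν/4) = x^ν := by
  rw [← Real.rpow_natCast x 4, ← Real.rpow_mul hx.le]
  congr 1
  ring

lemma key_center {f : Heis n → ℝ} (hcont : Continuous f) (hpos : ∀ p, 0 < f p)
    (hmax : ∀ p, f p ≤ f 0) {ν α : ℝ} (hν : 0 < ν) (hα : 0 < α)
    (hlim : Tendsto (fun ζ => korNorm ζ ^ ν * f ζ) (atInftyH n) (nhds α))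
    {β : ℝ} (hβ : 0 < β)
    (hsym : ∀ ξ : Heis n, ∃ lam : ℝ, 0 < lam ∧
      ∀ ζ : Heis n, ζ ≠ ξ → (lam / dH ξ ζ) ^ ν * f (Phi ξ lam β ζ) = f ζ)
    (k : Fin n) {v : ℂ} (hv : Complex.normSq v = 1) (zz : Fin n → ℂ) :
    ∃ δ, 0 < δ ∧ ∃ ψ : ℝ → ℝ,
      ψ 0 = f ((zz, (0:ℝ)) : Heis n) ∧
      HasDerivAt ψ (-ν * α ^ (-(2/ν)) * ((starRingEnd ℂ) (zz k) * v).re *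
        f ((zz,(0:ℝ)) : Heis n) ^ (1 + 2/ν)) 0 ∧
      ∀ s : ℝ, s ≠ 0 → |s| < δ →
        f ((Function.update zz k (zz k + (s:ℂ)*v), (0:ℝ)) : Heis n) ≤ ψ s := by
  obtain ⟨lam, hlam, hsξ⟩ := hsym ((zz, (0:ℝ)) : Heis n)
  obtain ⟨lam0, hlam0, hs0⟩ := hsym 0
  have hA : lam ^ ν * f ((zz,(0:ℝ)) : Heis n) = α := stepA hcont hν hα hlim β _ hlam hsξ
  have hA0 : lam0 ^ ν * f 0 = α := stepA hcont hν hα hlim β _ hlam0 hs0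
  set Y := Yv zz k v with hYdef
  set pr := (Pc zz k v lam β).re with hprdef
  set pi := (Pc zz k v lam β).im with hpidef
  set X := ((starRingEnd ℂ) (zz k) * v).re with hXdef
  have hpi : pi = -lam^2 * X := by rw [hpidef, hXdef]; exact Pc_im zz k v lam hβ
  set fξ := f ((zz,(0:ℝ)) : Heis n) with hfξdef
  have hfξ : 0 < fξ := hpos _
  have hf0 : 0 < f 0 := hpos 0
  have hlν : lam ^ ν = α / fξ := by rw [eq_div_iff hfξ.ne']; exact hA
  have hlν0 : lam0 ^ ν = α / f 0 := by rw [eq_div_iff hf0.ne']; exact hA0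
  set AA : ℝ → ℝ := fun s => AAf zz k v lam β s with hAAdef
  set BB : ℝ → ℝ := fun s => BBf zz k v lam β s with hBBdef
  set NN : ℝ → ℝ := fun s => lam^8 * (4*Y^2 + s^2) with hNNdef
  set DD : ℝ → ℝ := fun s => s^2 * (AA s)^2 + (BB s)^2 with hDDdef
  have hAAquad : AA = fun s => (nsq zz)*s^2 + (-2*pi)*s + (nsq zz*(4*Y^2) + 4*Y*pr + lam^4) := by
    funext s
    rw [hAAdef]; unfold AAf; rw [← hYdef, ← hprdef, ← hpidef]; ring
  have hAA' : HasDerivAt AA (-2*pi) 0 := by rw [hAAquad]; exact hasDerivAt_quad _ _ _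
  have hBBquad : BB = fun s => (2*pr)*s^2 + (4*Y*pi)*s + (-2*lam^4*Y) := by
    funext s
    rw [hBBdef]; unfold BBf; rw [← hYdef, ← hprdef, ← hpidef]; ring
  have hBB' : HasDerivAt BB (4*Y*pi) 0 := by rw [hBBquad]; exact hasDerivAt_quad _ _ _
  have hAA0 : AA 0 = nsq zz*(4*Y^2) + 4*Y*pr + lam^4 := by
    rw [hAAquad]
    show nsq zz*0^2 + (-2*pi)*0 + (nsq zz*(4*Y^2) + 4*Y*pr + lam^4) = _
    ring
  have hBB0 : BB 0 = -2*lam^4*Y := by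
    rw [hBBquad]
    show (2*pr)*0^2 + (4*Y*pi)*0 + (-2*lam^4*Y) = _
    ring
  have hAAc : Continuous AA := by
    rw [hAAquad]
    exact ((continuous_const.mul (continuous_pow 2)).add
      (continuous_const.mul continuous_id)).add continuous_const
  have hNN0 : NN 0 = 4*lam^8*Y^2 := by
    show lam^8*(4*Y^2+0^2) = _
    ring
  -- universal bound
  have hbound : ∀ s : ℝ, s ≠ 0 → 0 < DD s →
      f ((Function.update zz k (zz k + (s:ℂ)*v), (0:ℝ)) : Heis n) ≤
        fξ * (NN s / DD s) ^ (ν/4) := by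
    intro s hs hDDs
    have h4Y : (0:ℝ) < 4*Y^2+s^2 := by positivity
    set γs : Heis n := (Function.update zz k (zz k + (s:ℂ)*v), (0:ℝ)) with hγdef
    have hηe : hmul (hinv ((zz,(0:ℝ)) : Heis n)) γs = (Pi.single k ((s:ℂ)*v), -2*s*Y) := by
      rw [hγdef, hYdef]; exact eta_eq zz k v s
    have hηne : hmul (hinv ((zz,(0:ℝ)):Heis n)) γs ≠ 0 := by
      rw [hηe, hYdef]; exact eta_ne zz k hv hs
    set ζs := Phi ((zz,(0:ℝ)):Heis n) lam β γs with hζdef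
    have hK4ζ : K4 ζs = DD s / (s^2*(4*Y^2+s^2)^2) := by
      rw [hζdef, hγdef, K4_Phi_line zz k hv hlam.ne' β hs]
    have hK4pos : 0 < K4 ζs := by
      rw [hK4ζ]
      exact div_pos hDDs (by positivity)
    have hζ0 : ζs ≠ 0 := by
      intro e
      have h0 : K4 ζs = 0 := by rw [e]; exact K4_eq_zero_iff.2 rfl
      exact hK4pos.ne' h0
    have hd4ξ : dH ((zz,(0:ℝ)):Heis n) ζs ^ (4:ℕ) = lam^8 / (s^2*(s^2+4*Y^2)) := by
      rw [hζdef, dH_Phi_pow4 β hlam.ne' hηne, hηe, hYdef, K4_eta zz k hv s]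
    have hd4pos : 0 < dH ((zz,(0:ℝ)):Heis n) ζs ^ (4:ℕ) := by
      rw [hd4ξ]
      have : (0:ℝ) < s^2*(s^2+4*Y^2) := by positivity
      positivity
    have hdξpos : 0 < dH ((zz,(0:ℝ)):Heis n) ζs := by
      rcases (dH_nonneg ((zz,(0:ℝ)):Heis n) ζs).lt_or_eq with h | h
      · exact h
      · exfalso; rw [← h] at hd4pos; simp at hd4pos
    have hζξ : ζs ≠ ((zz,(0:ℝ)):Heis n) := by
      intro e
      rw [e, dH_self] at hdξpos
      exact lt_irrefl _ hdξpos
    have hinvol : Phi ((zz,(0:ℝ)):Heis n) lam β ζs = γs := by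
      rw [hζdef]; exact Phi_Phi _ β hlam.ne' hηne
    have hid1 := hsξ ζs hζξ
    rw [hinvol] at hid1
    have hid2 := hs0 ζs hζ0
    have hd40 : dH 0 ζs ^ (4:ℕ) = K4 ζs := by
      rw [dH_pow4, hmul_zero_right, K4_hinv]
    have hd0pos : 0 < dH 0 ζs := dH_pos hζ0
    have hq := hmax (Phi 0 lam0 β ζs)
    -- solve for f γs
    have hrp1 : (0:ℝ) < (lam / dH ((zz,(0:ℝ)):Heis n) ζs) ^ ν :=
      Real.rpow_pos_of_pos (div_pos hlam hdξpos) _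
    have hrp2 : (0:ℝ) < (lam0 / dH 0 ζs) ^ ν :=
      Real.rpow_pos_of_pos (div_pos hlam0 hd0pos) _
    have hfγ : f γs = (lam0 / dH 0 ζs) ^ ν / (lam / dH ((zz,(0:ℝ)):Heis n) ζs) ^ ν *
        f (Phi 0 lam0 β ζs) := by
      rw [div_mul_eq_mul_div, eq_div_iff hrp1.ne', hid2, ← hid1]
      ring
    have hstep : f γs ≤ (lam0 / dH 0 ζs) ^ ν / (lam / dH ((zz,(0:ℝ)):Heis n) ζs) ^ ν * f 0 := by
      rw [hfγ]
      exact mul_le_mul_of_nonneg_left hq (le_of_lt (div_pos hrp2 hrp1))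
    -- identify the coefficient
    have hratio4 : (dH ((zz,(0:ℝ)):Heis n) ζs / dH 0 ζs)^(4:ℕ) = NN s / DD s := by
      rw [div_pow, hd4ξ, hd40, hK4ζ, show NN s = lam^8*(4*Y^2+s^2) from rfl]
      have hne1 : s^2*(s^2+4*Y^2) ≠ 0 := by positivity
      have hne2 : (4*Y^2+s^2) ≠ 0 := by positivity
      field_simp
      ring
    have hcoef : (lam0 / dH 0 ζs) ^ ν / (lam / dH ((zz,(0:ℝ)):Heis n) ζs) ^ ν * f 0 =
        fξ * (NN s / DD s) ^ (ν/4) := by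
      have hdd : (NN s / DD s)^(ν/4) =
          dH ((zz,(0:ℝ)):Heis n) ζs ^ ν / dH 0 ζs ^ ν := by
        rw [← hratio4, rpow_four (div_pos hdξpos hd0pos), Real.div_rpow hdξpos.le hd0pos.le]
      rw [hdd, Real.div_rpow hlam0.le hd0pos.le, Real.div_rpow hlam.le hdξpos.le, hlν, hlν0]
      have p1 : (0:ℝ) < dH ((zz,(0:ℝ)):Heis n) ζs ^ ν := Real.rpow_pos_of_pos hdξpos _
      have p2 : (0:ℝ) < dH 0 ζs ^ ν := Real.rpow_pos_of_pos hd0pos _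
      field_simp
    rw [hγdef] at hstep
    rw [hcoef] at hstep
    exact hstep
  -- target derivative value
  set T := -ν * α ^ (-(2/ν)) * X * fξ ^ (1 + 2/ν) with hTdef
  by_cases hY0 : Y = 0
  · -- case Y = 0
    set GG : ℝ → ℝ := fun s => (AA s)^2 + (4*pr^2)*s^2 with hGGdef
    have hAA0' : AA 0 = lam^4 := by rw [hAA0, hY0]; ring
    have hGG0 : GG 0 = lam^8 := by
      rw [hGGdef]
      show (AA 0)^2 + (4*pr^2)*0^2 = lam^8
      rw [hAA0']; ring
    have hGG0pos : 0 < GG 0 := by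
      rw [hGG0]; positivity
    have hGGc : Continuous GG := by
      rw [hGGdef]
      exact (hAAc.pow 2).add (continuous_const.mul (continuous_pow 2))
    have hmem : GG ⁻¹' (Set.Ioi 0) ∈ nhds (0:ℝ) :=
      hGGc.continuousAt.preimage_mem_nhds (Ioi_mem_nhds hGG0pos)
    obtain ⟨δ, hδpos, hδ⟩ := Metric.mem_nhds_iff.mp hmem
    refine ⟨δ, hδpos, fun s => fξ * (lam^8 / GG s)^(ν/4), ?_, ?_, ?_⟩
    · show fξ * (lam^8 / GG 0)^(ν/4) = fξ
      rw [hGG0, div_self (by positivity : (lam:ℝ)^8 ≠ 0), Real.one_rpow, mul_one]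
    · -- derivative
      have hGG' : HasDerivAt GG (2*(AA 0)^1*(-2*pi) + (4*pr^2)*(2*0^1)) 0 :=
        (hAA'.pow 2).add ((hasDerivAt_pow 2 0).const_mul (4*pr^2))
      have hquot : HasDerivAt (fun s => lam^8 / GG s)
          ((0 * GG 0 - lam^8 * (2*(AA 0)^1*(-2*pi) + (4*pr^2)*(2*0^1))) / (GG 0)^2) 0 :=
        (hasDerivAt_const 0 (lam^8)).div hGG' hGG0pos.ne'
      have hrp : HasDerivAt (fun s => (lam^8 / GG s)^(ν/4))
          (((0 * GG 0 - lam^8 * (2*(AA 0)^1*(-2*pi) + (4*pr^2)*(2*0^1))) / (GG 0)^2) * (ν/4) *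
            (lam^8/GG 0)^(ν/4-1)) 0 :=
        hquot.rpow_const (Or.inl (by rw [hGG0]; positivity))
      have hψ' := hrp.const_mul fξ
      have hval : fξ * (((0 * GG 0 - lam^8 * (2*(AA 0)^1*(-2*pi) + (4*pr^2)*(2*0^1))) / (GG 0)^2) * (ν/4) *
            (lam^8/GG 0)^(ν/4-1)) = T := by
        rw [hGG0, hAA0', div_self (by positivity : (lam:ℝ)^8 ≠ 0), Real.one_rpow, hTdef, hpi,
          ← const_identity X hν hα hlam hfξ hA]
        field_simp
        ring
      rw [hval] at hψ'
      exact hψ'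
    · intro s hs hsδ
      have hGGs : 0 < GG s := by
        have : s ∈ Metric.ball (0:ℝ) δ := by
          rw [Metric.mem_ball, Real.dist_eq, sub_zero]; exact hsδ
        exact hδ this
      have hDDs : DD s = s^2 * GG s := by
        rw [hDDdef, hGGdef, hBBquad, hY0]
        show s^2*(AA s)^2 + ((2*pr)*s^2 + (4*0*pi)*s + (-2*lam^4*0))^2 =
          s^2*((AA s)^2 + (4*pr^2)*s^2)
        ring
      have hDDpos : 0 < DD s := by
        rw [hDDs]
        have hs2 : (0:ℝ) < s^2 := by positivity
        positivity
      have hb := hbound s hs hDDpos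
      have heqc : NN s / DD s = lam^8 / GG s := by
        have h1 : NN s = lam^8*(4*Y^2+s^2) := rfl
        rw [h1, hDDs, hY0]
        have hGne : GG s ≠ 0 := hGGs.ne'
        field_simp
        ring
      rw [heqc] at hb
      exact hb
  · -- case Y ≠ 0
    have hDD0 : DD 0 = 4*lam^8*Y^2 := by
      rw [hDDdef]
      show 0^2*(AA 0)^2 + (BB 0)^2 = 4*lam^8*Y^2
      rw [hBB0]; ring
    have hDD0pos : 0 < DD 0 := by
      rw [hDD0]
      have h1 : (0:ℝ) < lam^8 := by positivity
      have h2 : (0:ℝ) < Y^2 := by positivity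
      positivity
    have hBBc : Continuous BB := by
      rw [hBBquad]
      exact ((continuous_const.mul (continuous_pow 2)).add
        (continuous_const.mul continuous_id)).add continuous_const
    have hDDc : Continuous DD := by
      rw [hDDdef]
      exact ((continuous_pow 2).mul (hAAc.pow 2)).add (hBBc.pow 2)
    have hmem : DD ⁻¹' (Set.Ioi 0) ∈ nhds (0:ℝ) :=
      hDDc.continuousAt.preimage_mem_nhds (Ioi_mem_nhds hDD0pos)
    obtain ⟨δ, hδpos, hδ⟩ := Metric.mem_nhds_iff.mp hmem
    have hbase : NN 0 / DD 0 = 1 := by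
      rw [hNN0, hDD0]
      exact div_self (by positivity)
    refine ⟨δ, hδpos, fun s => fξ * (NN s / DD s)^(ν/4), ?_, ?_, ?_⟩
    · show fξ * (NN 0 / DD 0)^(ν/4) = fξ
      rw [hbase, Real.one_rpow, mul_one]
    · have hNN' : HasDerivAt NN (lam^8*(2*0^1)) 0 :=
        ((hasDerivAt_pow 2 0).const_add (4*Y^2)).const_mul (lam^8)
      have hDD' : HasDerivAt DD
          ((2*0^1)*(AA 0)^2 + 0^2*(2*(AA 0)^1*(-2*pi)) + 2*(BB 0)^1*(4*Y*pi)) 0 :=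
        ((hasDerivAt_pow 2 0).mul (hAA'.pow 2)).add (hBB'.pow 2)
      have hquot : HasDerivAt (fun s => NN s / DD s)
          ((lam^8*(2*0^1) * DD 0 - NN 0 * ((2*0^1)*(AA 0)^2 + 0^2*(2*(AA 0)^1*(-2*pi)) + 2*(BB 0)^1*(4*Y*pi))) / (DD 0)^2) 0 :=
        hNN'.div hDD' hDD0pos.ne'
      have hrp : HasDerivAt (fun s => (NN s / DD s)^(ν/4))
          (((lam^8*(2*0^1) * DD 0 - NN 0 * ((2*0^1)*(AA 0)^2 + 0^2*(2*(AA 0)^1*(-2*pi)) + 2*(BB 0)^1*(4*Y*pi))) / (DD 0)^2) * (ν/4) *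
            (NN 0/DD 0)^(ν/4-1)) 0 :=
        hquot.rpow_const (Or.inl (by rw [hbase]; exact one_ne_zero))
      have hψ' := hrp.const_mul fξ
      have hval : fξ * (((lam^8*(2*0^1) * DD 0 - NN 0 * ((2*0^1)*(AA 0)^2 + 0^2*(2*(AA 0)^1*(-2*pi)) + 2*(BB 0)^1*(4*Y*pi))) / (DD 0)^2) * (ν/4) *
            (NN 0/DD 0)^(ν/4-1)) = T := by
        rw [hbase, Real.one_rpow, hNN0, hDD0, hBB0, hTdef, hpi,
          ← const_identity X hν hα hlam hfξ hA]
        have hY2 : Y^2 ≠ 0 := pow_ne_zero 2 hY0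
        field_simp
        ring
      rw [hval] at hψ'
      exact hψ'
    · intro s hs hsδ
      have hDDs : 0 < DD s := by
        have : s ∈ Metric.ball (0:ℝ) δ := by
          rw [Metric.mem_ball, Real.dist_eq, sub_zero]; exact hsδ
        exact hδ this
      exact hbound s hs hDDs

end HeisPf
namespace HeisPf
open Heis Set

/-- slope consequence of the local upper-bound data. -/
lemma slope_freq {F : ℝ → ℝ} {σ w : ℝ}
    (h : ∃ δ, 0 < δ ∧ ∃ ψ : ℝ → ℝ, ψ 0 = F σ ∧ HasDerivAt ψ w 0 ∧
         ∀ s : ℝ, s ≠ 0 → |s| < δ → F (σ + s) ≤ ψ s) :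
    ∀ r, w < r → ∀ᶠ z in nhdsWithin σ (Set.Ioi σ), slope F σ z < r := by
  obtain ⟨δ, hδ, ψ, hψ0, hψ', hle⟩ := h
  intro r hr
  have h1 : Tendsto (slope ψ 0) (nhdsWithin 0 {(0:ℝ)}ᶜ) (nhds w) :=
    hasDerivAt_iff_tendsto_slope.mp hψ'
  have h2 : ∀ᶠ s in nhdsWithin 0 {(0:ℝ)}ᶜ, slope ψ 0 s < r := h1.eventually_lt_const hr
  have h3 : ∀ᶠ s in nhdsWithin (0:ℝ) (Set.Ioi 0), slope ψ 0 s < r :=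
    nhdsWithin_mono 0 (fun x hx => ne_of_gt hx) h2
  have h4 : ∀ᶠ s in nhdsWithin (0:ℝ) (Set.Ioi 0), s < δ :=
    mem_nhdsWithin_of_mem_nhds (Iio_mem_nhds hδ)
  obtain ⟨u, hu, hsub⟩ := mem_nhdsGT_iff_exists_Ioo_subset.mp (h3.and h4)
  apply Filter.eventually_iff_exists_mem.mpr
  refine ⟨Set.Ioo σ (σ + u), ?_, ?_⟩
  · apply mem_nhdsGT_iff_exists_Ioo_subset.mpr
    exact ⟨σ + u, by simp [Set.mem_Ioi]; exact hu, subset_rfl⟩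
  · intro z hz
    set s := z - σ with hsdef
    have hs0 : 0 < s := by simp [hsdef]; exact hz.1
    have hsu : s < u := by simp [hsdef]; linarith [hz.2]
    have hE := hsub ⟨hs0, hsu⟩
    obtain ⟨hsl, hsδ⟩ := hE
    have hFz : F z = F (σ + s) := by congr 1; rw [hsdef]; ring
    have hle' : F (σ + s) ≤ ψ s := hle s hs0.ne' (by rwa [abs_of_pos hs0])
    have hslF : slope F σ z = (F (σ + s) - ψ 0) / s := by
      rw [slope_def_field, hFz, hψ0, hsdef]
    have hslψ : slope ψ 0 s = (ψ s - ψ 0) / s := by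
      rw [slope_def_field, sub_zero]
    rw [hslF]
    calc (F (σ + s) - ψ 0) / s ≤ (ψ s - ψ 0) / s :=
          div_le_div_of_nonneg_right (sub_le_sub_right hle' _) hs0.le
      _ < r := by rw [← hslψ]; exact hsl


lemma FbFa_le {F φ : ℝ → ℝ} (hF : Continuous F) (hφ : Continuous φ)
    (H : ∀ σ : ℝ, ∀ r, φ σ < r → ∀ᶠ z in nhdsWithin σ (Set.Ioi σ), slope F σ z < r)
    {a b : ℝ} (hab : a ≤ b) : F b - F a ≤ ∫ t in a..b, φ t := by
  have hFTC : ∀ x : ℝ, HasDerivAt (fun u => (∫ t in a..u, φ t) + F a) (φ x) x := fun x =>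
    ((hφ.integral_hasStrictDerivAt a x).hasDerivAt).add_const (F a)
  have hmain := image_le_of_liminf_slope_right_le_deriv_boundary
    (f := F) (B := fun u => (∫ t in a..u, φ t) + F a) (B' := φ) (a := a) (b := b)
    hF.continuousOn
    (by simp [intervalIntegral.integral_same])
    (fun x _ => (hFTC x).continuousAt.continuousWithinAt)
    (fun x _ => (hFTC x).hasDerivWithinAt)
    (fun x _ r hr => (H x r hr).frequently)
  have hb := hmain (Set.right_mem_Icc.mpr hab)
  linarith [hb]

lemma hasDerivAt_of_bound_data {F φ : ℝ → ℝ} (hF : Continuous F) (hφ : Continuous φ)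
    (H : ∀ σ : ℝ, ∃ δ, 0 < δ ∧ ∃ ψ : ℝ → ℝ, ψ 0 = F σ ∧ HasDerivAt ψ (φ σ) 0 ∧
         ∀ s : ℝ, s ≠ 0 → |s| < δ → F (σ + s) ≤ ψ s) :
    HasDerivAt F (φ 0) 0 := by
  have Hup : ∀ σ : ℝ, ∀ r, φ σ < r → ∀ᶠ z in nhdsWithin σ (Set.Ioi σ), slope F σ z < r :=
    fun σ => slope_freq (H σ)
  have step1 : ∀ a b : ℝ, a ≤ b → F b - F a ≤ ∫ t in a..b, φ t :=
    fun a b hab => FbFa_le hF hφ Hup hab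
  have step2 : ∀ a b : ℝ, a ≤ b → ∫ t in a..b, φ t ≤ F b - F a := by
    intro a b hab
    set G : ℝ → ℝ := fun x => F (a + b - x) with hG
    set φG : ℝ → ℝ := fun x => -φ (a + b - x) with hφG
    have hGc : Continuous G := hF.comp (continuous_const.sub continuous_id)
    have hφGc : Continuous φG := (hφ.comp (continuous_const.sub continuous_id)).neg
    have HG : ∀ σ : ℝ, ∃ δ, 0 < δ ∧ ∃ ψ : ℝ → ℝ, ψ 0 = G σ ∧ HasDerivAt ψ (φG σ) 0 ∧
        ∀ s : ℝ, s ≠ 0 → |s| < δ → G (σ + s) ≤ ψ s := by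
      intro σ
      obtain ⟨δ, hδ, ψ, hψ0, hψ', hle⟩ := H (a + b - σ)
      refine ⟨δ, hδ, fun s => ψ (-s), by show ψ (-0) = F (a + b - σ); rw [neg_zero]; exact hψ0, ?_, ?_⟩
      · have hneg : HasDerivAt (fun s : ℝ => -s) (-1) 0 := (hasDerivAt_id 0).neg
        have h2 : HasDerivAt (ψ ∘ fun s : ℝ => -s) (φ (a+b-σ) * (-1)) 0 := by
          apply HasDerivAt.comp
          · simpa using hψ'
          · exact hneg
        have h3 : (ψ ∘ fun s : ℝ => -s) = fun s => ψ (-s) := rfl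
        rw [h3] at h2
        have h4 : φ (a+b-σ) * (-1) = φG σ := by rw [hφG]; ring
        rwa [h4] at h2
      · intro s hs hsδ
        have hle' := hle (-s) (neg_ne_zero.mpr hs) (by rwa [abs_neg])
        have he : a + b - (σ + s) = (a + b - σ) + (-s) := by ring
        show F (a + b - (σ + s)) ≤ ψ (-s)
        rw [he]
        exact hle'
    have HupG := fun σ => slope_freq (HG σ)
    have h1 := FbFa_le hGc hφGc HupG hab
    have hGb : G b = F a := by rw [hG]; simp only []; congr 1; ring
    have hGa : G a = F b := by rw [hG]; simp only []; congr 1; ring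
    have hint : (∫ t in a..b, φG t) = -∫ t in a..b, φ t := by
      rw [hφG]
      rw [intervalIntegral.integral_neg]
      congr 1
      rw [intervalIntegral.integral_comp_sub_left (fun t => φ t) (a+b)]
      have e1 : a + b - b = a := by ring
      have e2 : a + b - a = b := by ring
      rw [e1, e2]
    rw [hGb, hGa, hint] at h1
    linarith
  have heq : ∀ x : ℝ, F x = F 0 + ∫ t in (0:ℝ)..x, φ t := by
    intro x
    rcases le_total 0 x with h | h
    · have h1 := step1 0 x h
      have h2 := step2 0 x h
      linarith
    · have h1 := step1 x 0 h
      have h2 := step2 x 0 h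
      have h3 : (∫ t in (0:ℝ)..x, φ t) = -∫ t in x..(0:ℝ), φ t :=
        (intervalIntegral.integral_symm _ _)
      rw [h3]
      linarith
  have hFTC : HasDerivAt (fun u => F 0 + ∫ t in (0:ℝ)..u, φ t) (φ 0) 0 :=
    ((hφ.integral_hasStrictDerivAt 0 0).hasDerivAt).const_add (F 0)
  have hfun : F = fun u => F 0 + ∫ t in (0:ℝ)..u, φ t := funext heq
  rw [hfun]
  exact hFTC

end HeisPf
namespace HeisPf
open Heis

variable {n : ℕ}

lemma final_line {f : Heis n → ℝ} (hcont : Continuous f) (hpos : ∀ p, 0 < f p)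
    (hmax : ∀ p, f p ≤ f 0) {ν α : ℝ} (hν : 0 < ν) (hα : 0 < α)
    (hlim : Tendsto (fun ζ => korNorm ζ ^ ν * f ζ) (atInftyH n) (nhds α))
    {β : ℝ} (hβ : 0 < β)
    (hsym : ∀ ξ : Heis n, ∃ lam : ℝ, 0 < lam ∧
      ∀ ζ : Heis n, ζ ≠ ξ → (lam / dH ξ ζ) ^ ν * f (Phi ξ lam β ζ) = f ζ)
    (k : Fin n) {v : ℂ} (hv : Complex.normSq v = 1) (z : Fin n → ℂ) :
    HasDerivAt (fun σ : ℝ => f (Function.update z k (z k + (σ:ℂ)*v), 0))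
      (-ν * α ^ (-(2/ν)) * ((starRingEnd ℂ) (z k) * v).re * f ((z, (0:ℝ)) : Heis n) ^ (1 + 2/ν))
      0 := by
  set F : ℝ → ℝ := fun σ => f (Function.update z k (z k + (σ:ℂ)*v), 0) with hF
  set φ : ℝ → ℝ := fun σ =>
    -ν * α ^ (-(2/ν)) * (((starRingEnd ℂ) (z k) * v).re + σ) * F σ ^ (1 + 2/ν) with hφ
  have hcurve : Continuous fun σ : ℝ =>
      ((Function.update z k (z k + (σ:ℂ)*v) : Fin n → ℂ), (0:ℝ)) := by
    apply Continuous.prodMk ?_ continuous_const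
    apply continuous_pi
    intro j
    have he : (fun σ : ℝ => Function.update z k (z k + (σ:ℂ)*v) j) =
        fun σ : ℝ => if j = k then z k + (σ:ℂ)*v else z j := by
      funext σ; rw [Function.update_apply]
    rw [he]
    by_cases hj : j = k
    · simp only [if_pos hj]
      exact continuous_const.add (Complex.continuous_ofReal.mul continuous_const)
    · simp only [if_neg hj]
      exact continuous_const
  have hFc : Continuous F := hcont.comp hcurve
  have hφc : Continuous φ := by
    rw [hφ]
    exact (continuous_const.mul (continuous_const.add continuous_id)).mul
      (hFc.rpow_const fun σ => Or.inl (hpos _).ne')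
  have hconjv : (starRingEnd ℂ) v * v = 1 := by
    rw [mul_comm, Complex.mul_conj, hv]
    simp
  have H : ∀ σ : ℝ, ∃ δ, 0 < δ ∧ ∃ ψ : ℝ → ℝ, ψ 0 = F σ ∧ HasDerivAt ψ (φ σ) 0 ∧
      ∀ s : ℝ, s ≠ 0 → |s| < δ → F (σ + s) ≤ ψ s := by
    intro σ
    obtain ⟨δ, hδ, ψ, hψ0, hψ', hle⟩ := key_center hcont hpos hmax hν hα hlim hβ hsym k hv
      (Function.update z k (z k + (σ:ℂ)*v))
    have h1 : (Function.update z k (z k + (σ:ℂ)*v)) k = z k + (σ:ℂ)*v :=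
      Function.update_self k _ z
    have h2 : ((starRingEnd ℂ) (z k + (σ:ℂ)*v) * v).re = ((starRingEnd ℂ) (z k) * v).re + σ := by
      rw [map_add, add_mul, Complex.add_re]
      congr 1
      rw [map_mul, Complex.conj_ofReal]
      have h3 : (σ:ℂ) * (starRingEnd ℂ) v * v = (σ:ℂ) * ((starRingEnd ℂ) v * v) := by ring
      rw [h3, hconjv, mul_one, Complex.ofReal_re]
    refine ⟨δ, hδ, ψ, hψ0, ?_, ?_⟩
    · have h4 : -ν * α ^ (-(2/ν)) *
          ((starRingEnd ℂ) ((Function.update z k (z k + (σ:ℂ)*v)) k) * v).re *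
          f ((Function.update z k (z k + (σ:ℂ)*v), (0:ℝ)) : Heis n) ^ (1 + 2/ν) = φ σ := by
        rw [h1, h2, hφ]
      rw [← h4]
      exact hψ'
    · intro s hs hsδ
      have hle' := hle s hs hsδ
      have hupd : Function.update (Function.update z k (z k + (σ:ℂ)*v)) k
          ((Function.update z k (z k + (σ:ℂ)*v)) k + (s:ℂ)*v) =
          Function.update z k (z k + ((σ+s : ℝ):ℂ)*v) := by
        rw [h1, Function.update_idem]
        congr 1
        push_cast
        ring
      show f (Function.update z k (z k + ((σ+s : ℝ):ℂ)*v), 0) ≤ ψ s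
      rw [← hupd]
      exact hle'
  have hres := hasDerivAt_of_bound_data hFc hφc H
  have hF0 : F 0 = f ((z, (0:ℝ)) : Heis n) := by
    show f (Function.update z k (z k + ((0:ℝ):ℂ)*v), 0) = _
    norm_num [Function.update_eq_self]
  have hφ0 : φ 0 = -ν * α ^ (-(2/ν)) * ((starRingEnd ℂ) (z k) * v).re *
      f ((z, (0:ℝ)) : Heis n) ^ (1 + 2/ν) := by
    rw [hφ]
    show -ν * α ^ (-(2/ν)) * (((starRingEnd ℂ) (z k) * v).re + 0) * F 0 ^ (1 + 2/ν) = _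
    rw [add_zero, hF0]
  rwa [hφ0] at hres

end HeisPf
open Heis
/-- the x_k and y_k derivative identities on the hyperplane t = 0. -/
theorem xy_derivative_identities (n : ℕ) (hn : 1 ≤ n) (ν : ℝ) (hν : 0 < ν)
    (f : Heis n → ℝ) (hcont : Continuous f) (hpos : ∀ p, 0 < f p)
    (hmax : ∀ p, f p ≤ f 0)
    (α : ℝ) (hα : 0 < α)
    (hlim : Tendsto (fun ζ => korNorm ζ ^ ν * f ζ) (atInftyH n) (nhds α))
    (β : ℝ) (hβ : β = α ^ (2 / ν) * f 0 ^ (-(2 / ν)))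
    (hsym : ∀ ξ : Heis n, ∃ lam : ℝ, 0 < lam ∧
      ∀ ζ : Heis n, ζ ≠ ξ → (lam / dH ξ ζ) ^ ν * f (Phi ξ lam β ζ) = f ζ) :
    ∀ (k : Fin n) (z : Fin n → ℂ),
      HasDerivAt (fun s : ℝ => f (Function.update z k (z k + (s : ℂ)), 0))
        (-ν * α ^ (-(2 / ν)) * (z k).re * f (z, 0) ^ (1 + 2 / ν)) 0 ∧
      HasDerivAt (fun s : ℝ => f (Function.update z k (z k + (s : ℂ) * Complex.I), 0))
        (-ν * α ^ (-(2 / ν)) * (z k).im * f (z, 0) ^ (1 + 2 / ν)) 0 := by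
  intro k z
  have hβpos : 0 < β := by
    rw [hβ]
    exact mul_pos (Real.rpow_pos_of_pos hα _) (Real.rpow_pos_of_pos (hpos 0) _)
  constructor
  · have h := HeisPf.final_line hcont hpos hmax hν hα hlim hβpos hsym k
      (v := 1) (by simp) z
    have hfun : (fun σ : ℝ => f (Function.update z k (z k + (σ:ℂ)*1), 0)) =
        (fun s : ℝ => f (Function.update z k (z k + (s:ℂ)), 0)) := by
      funext σ; rw [mul_one]
    rw [hfun] at h
    have hval : ((starRingEnd ℂ) (z k) * 1).re = (z k).re := by simp
    rw [hval] at h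
    exact h
  · have h := HeisPf.final_line hcont hpos hmax hν hα hlim hβpos hsym k
      (v := Complex.I) (by simp) z
    have hval : ((starRingEnd ℂ) (z k) * Complex.I).re = (z k).im := by
      simp [Complex.mul_re]
    rw [hval] at h
    exact h
end
end
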